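/- arXiv:1111.0027 — 8 statements merged into one kernel-verified Lean document; each statement's English description precedes it below -/
import Mathlib

section
/- For every integer b ≥ 2 and every g ∈ C¹(S¹) with ∫ g dx = 0, the Perron–Frobenius operator satisfies ‖T̂*_b g‖ ≤ 2 b^{−1} ‖g‖, where ‖h‖ := sup|h| + sup|h'|. -/
/-!
Setting: the circle `S¹ = ℝ/ℤ` with Lebesgue (Haar) probability measure, realized as
`1`-periodic functions on `ℝ` together with Lebesgue measure restricted to `(0, 1]`.
For an integer `b ≥ 2`, the map `T_b x = bx (mod 1)` lifts to `x ↦ b * x` on `ℝ`, and its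
Perron–Frobenius operator (the `L²`-adjoint of the Koopman operator `g ↦ g ∘ T_b`) is
`(T̂*_b g)(x) = (1/b) ∑_{j<b} g((x+j)/b)`.
-/

open MeasureTheory ProbabilityTheory Filter Function
open scoped ENNReal Topology

/-- The Lebesgue (Haar) probability measure of the circle, realized on `(0, 1] ⊆ ℝ`. -/
noncomputable def circleMeasure : Measure ℝ := volume.restrict (Set.Ioc 0 1)

/-- The Perron–Frobenius operator of `T_b x = bx (mod 1)`, acting on (`1`-periodic)
functions on `ℝ`: `(T̂*_b g)(x) = (1/b) ∑_{j<b} g((x+j)/b)`. -/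
noncomputable def PFc (b : ℕ) (g : ℝ → ℝ) : ℝ → ℝ :=
  fun x => (1 / (b : ℝ)) * ∑ j ∈ Finset.range b, g ((x + j) / b)

/-- `T̂*_{b_1} ⋯ T̂*_{b_k} g` for a finite sequence `[b_1, …, b_k]`. -/
noncomputable def PFcList (l : List ℕ) (g : ℝ → ℝ) : ℝ → ℝ := l.foldr PFc g

/-- `PFcSeg a i j = T̂*_{[i..j]} = T̂*_{a_j} ⋯ T̂*_{a_i}` for `i ≤ j`, the identity otherwise. -/
noncomputable def PFcSeg (a : ℕ → ℕ) (i : ℕ) : ℕ → (ℝ → ℝ) → (ℝ → ℝ)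
  | 0 => id
  | j + 1 => if i ≤ j + 1 then fun g => PFc (a (j + 1)) (PFcSeg a i j g) else id

/-- `u_k = ∑_{i=1}^k T̂*_{[i+1..k]} f`. -/
noncomputable def uc (a : ℕ → ℕ) (f : ℝ → ℝ) (k : ℕ) : ℝ → ℝ :=
  fun x => ∑ i ∈ Finset.Icc 1 k, PFcSeg a (i + 1) k f x

/-- `T_{[k]} = T_{a_k} ∘ ⋯ ∘ T_{a_1}` is multiplication (mod 1) by `∏_{i=1}^k a_i`. -/
def prodA (a : ℕ → ℕ) (k : ℕ) : ℕ := ∏ i ∈ Finset.Icc 1 k, a i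

/-- The Birkhoff-like sums `S_n = ∑_{k=1}^n f ∘ T_{[k]}`, for a `1`-periodic `f`. -/
noncomputable def Sc (a : ℕ → ℕ) (f : ℝ → ℝ) (n : ℕ) : ℝ → ℝ :=
  fun x => ∑ k ∈ Finset.Icc 1 n, f ((prodA a k : ℝ) * x)

/-- The `C¹`-norm `‖g‖ = sup|g| + sup|g'|`. -/
noncomputable def Cnorm (g : ℝ → ℝ) : ℝ := (⨆ x : ℝ, |g x|) + ⨆ x : ℝ, |deriv g x|

/-- The pullback σ-algebra `T_b^{-1}(Borel)` on the circle, realized on `ℝ` as the σ-algebra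
generated by the lift `x ↦ fract (b * x)` of `T_b`. -/
noncomputable def circleSigma (b : ℕ) : MeasurableSpace ℝ :=
  MeasurableSpace.comap (fun x => Int.fract ((b : ℝ) * x)) Real.measurableSpace

/-- `cos²χ_k = ‖E[u_k | T_{a_{k+1}}^{-1}(Borel)]‖²_{L²} / ‖u_k‖²_{L²}` (`= 0` when `u_k = 0`,
by the convention `c / 0 = 0`). -/
noncomputable def cos2c (a : ℕ → ℕ) (f : ℝ → ℝ) (k : ℕ) : ℝ :=
  (∫ x, ((circleMeasure[uc a f k|circleSigma (a (k + 1))]) x) ^ 2 ∂circleMeasure) /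
    ∫ x, (uc a f k x) ^ 2 ∂circleMeasure

/-- For every integer `b ≥ 2` and every zero-mean `g ∈ C¹(S¹)`,
`‖T̂*_b g‖ ≤ 2 b⁻¹ ‖g‖` in the `C¹`-norm `‖h‖ = sup|h| + sup|h'|`. -/
theorem PF_contraction_single
    (b : ℕ) (hb : 2 ≤ b)
    (g : ℝ → ℝ) (hg_per : Periodic g 1) (hg_C1 : ContDiff ℝ 1 g)
    (hg_mean : ∫ x in Set.Ioc (0 : ℝ) 1, g x = 0) :
    Cnorm (PFc b g) ≤ 2 * (b : ℝ)⁻¹ * Cnorm g := by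
  have hb0 : (0:ℝ) < b := by exact_mod_cast Nat.lt_of_lt_of_le Nat.zero_lt_two hb
  have hbne : (b:ℝ) ≠ 0 := ne_of_gt hb0
  set M := ⨆ x : ℝ, |deriv g x| with hMdef
  have hgc : Continuous g := hg_C1.continuous
  have hderc : Continuous (deriv g) := hg_C1.continuous_deriv le_rfl
  have hdiff : Differentiable ℝ g := hg_C1.differentiable one_ne_zero
  have hderp : Periodic (deriv g) 1 := by
    intro x
    have h1 : (fun y => g (y + 1)) = g := funext fun y => hg_per y
    calc deriv g (x + 1) = deriv (fun y => g (y + 1)) x := (deriv_comp_add_const g 1 x).symm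
    _ = deriv g x := by rw [h1]
  have hbdd : BddAbove (Set.range fun x => |deriv g x|) := by
    have hsub : Set.range (fun x => |deriv g x|) ⊆ (fun x => |deriv g x|) '' Set.Icc 0 1 := by
      rintro _ ⟨x, rfl⟩
      refine ⟨Int.fract x, ⟨Int.fract_nonneg x, (Int.fract_lt_one x).le⟩, ?_⟩
      have h2 := hderp.sub_int_mul_eq (x := x) ⌊x⌋
      simp only [mul_one] at h2
      simp only [Int.fract]; rw [h2]
    exact BddAbove.mono hsub ((isCompact_Icc.image (by continuity)).bddAbove)
  have hM : ∀ x, |deriv g x| ≤ M := fun x => le_ciSup hbdd x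
  have hM0 : 0 ≤ M := (abs_nonneg _).trans (hM 0)
  have hlip : ∀ s t : ℝ, |g t - g s| ≤ M * |t - s| := by
    intro s t
    have h3 := (convex_univ : Convex ℝ (Set.univ : Set ℝ)).norm_image_sub_le_of_norm_deriv_le
      (fun x _ => hdiff x) (fun x _ => by simpa using hM x) (Set.mem_univ s) (Set.mem_univ t)
    simpa [Real.norm_eq_abs] using h3
  have hint : ∀ t₁ t₂ : ℝ, IntervalIntegrable g volume t₁ t₂ :=
    fun t₁ t₂ => hgc.intervalIntegrable t₁ t₂
  have hint01 : ∫ t in (0:ℝ)..1, g t = 0 := by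
    rw [intervalIntegral.integral_of_le zero_le_one]; exact hg_mean
  -- sup bound on |PFc b g|
  have hsup1 : ∀ x : ℝ, |PFc b g x| ≤ M * (b:ℝ)⁻¹ := by
    intro x
    set p : ℕ → ℝ := fun j => (x + j) / b with hpdef
    have hstep : ∀ j : ℕ, p (j+1) - p j = (b:ℝ)⁻¹ := by
      intro j; simp only [hpdef]; push_cast; field_simp; ring
    have hsum0 : ∑ j ∈ Finset.range b, ∫ t in p j..p (j+1), g t = 0 := by
      rw [intervalIntegral.sum_integral_adjacent_intervals (fun k _ => hint _ _)]
      have hpb : p b = p 0 + 1 := by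
        simp only [hpdef]; push_cast; field_simp; ring
      rw [hpb, hg_per.intervalIntegral_add_eq (p 0) 0, zero_add, hint01]
    have hterm : ∀ j ∈ Finset.range b,
        |(1/(b:ℝ)) * g (p j) - ∫ t in p j..p (j+1), g t| ≤ M * (b:ℝ)⁻¹ * (b:ℝ)⁻¹ := by
      intro j _
      have hconst : (1/(b:ℝ)) * g (p j) = ∫ _t in p j..p (j+1), g (p j) := by
        rw [intervalIntegral.integral_const, hstep j, smul_eq_mul, one_div]
      rw [hconst, ← intervalIntegral.integral_sub (intervalIntegrable_const) (hint _ _)]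
      have hle : p j ≤ p (j+1) := by
        have := hstep j; nlinarith [inv_pos.mpr hb0]
      have hbound : ∀ t ∈ Set.uIoc (p j) (p (j+1)), ‖g (p j) - g t‖ ≤ M * (b:ℝ)⁻¹ := by
        intro t ht
        rw [Set.uIoc_of_le hle] at ht
        have h4 : |g (p j) - g t| ≤ M * |p j - t| := by
          have := hlip t (p j); simpa using this
        have h5 : |p j - t| ≤ (b:ℝ)⁻¹ := by
          rw [abs_sub_comm, abs_of_nonneg (by linarith [ht.1.le])]
          have := hstep j; linarith [ht.2]
        calc ‖g (p j) - g t‖ = |g (p j) - g t| := rfl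
        _ ≤ M * |p j - t| := h4
        _ ≤ M * (b:ℝ)⁻¹ := by nlinarith
      have h6 := intervalIntegral.norm_integral_le_of_norm_le_const hbound
      have h7 : |p (j+1) - p j| = (b:ℝ)⁻¹ := by
        rw [hstep j]; exact abs_of_pos (inv_pos.mpr hb0)
      calc |∫ t in p j..p (j+1), (g (p j) - g t)| ≤ M * (b:ℝ)⁻¹ * |p (j+1) - p j| := h6
      _ = M * (b:ℝ)⁻¹ * (b:ℝ)⁻¹ := by rw [h7]
    have hPF : PFc b g x = ∑ j ∈ Finset.range b,
        ((1/(b:ℝ)) * g (p j) - ∫ t in p j..p (j+1), g t) := by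
      rw [Finset.sum_sub_distrib, hsum0, sub_zero, PFc, Finset.mul_sum]
    rw [hPF]
    calc |∑ j ∈ Finset.range b, ((1/(b:ℝ)) * g (p j) - ∫ t in p j..p (j+1), g t)|
        ≤ ∑ j ∈ Finset.range b, |(1/(b:ℝ)) * g (p j) - ∫ t in p j..p (j+1), g t| :=
          Finset.abs_sum_le_sum_abs _ _
    _ ≤ ∑ _j ∈ Finset.range b, M * (b:ℝ)⁻¹ * (b:ℝ)⁻¹ := Finset.sum_le_sum hterm
    _ = M * (b:ℝ)⁻¹ := by
        rw [Finset.sum_const, Finset.card_range, nsmul_eq_mul]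
        field_simp
  -- derivative of PFc b g
  have hderiv : ∀ x : ℝ, deriv (PFc b g) x
      = (1/(b:ℝ)) * ∑ j ∈ Finset.range b, (deriv g ((x + j)/b) * (b:ℝ)⁻¹) := by
    intro x
    have hd : HasDerivAt (PFc b g)
        ((1/(b:ℝ)) * ∑ j ∈ Finset.range b, (deriv g ((x + j)/b) * (b:ℝ)⁻¹)) x := by
      have hterm : ∀ j ∈ Finset.range b,
          HasDerivAt (fun y => g ((y + j)/b)) (deriv g ((x + j)/b) * (b:ℝ)⁻¹) x := by
        intro j _
        have h1 : HasDerivAt (fun y : ℝ => (y + (j:ℝ))/b) ((b:ℝ)⁻¹) x := by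
          simpa [div_eq_mul_inv] using (((hasDerivAt_id x).add_const (j:ℝ)).div_const (b:ℝ))
        exact ((hdiff _).hasDerivAt).comp x h1
      have hsum := HasDerivAt.fun_sum hterm
      exact hsum.const_mul (1/(b:ℝ))
    exact hd.deriv
  have hsup2 : ∀ x : ℝ, |deriv (PFc b g) x| ≤ M * (b:ℝ)⁻¹ := by
    intro x
    rw [hderiv x]
    calc |(1/(b:ℝ)) * ∑ j ∈ Finset.range b, (deriv g ((x + j)/b) * (b:ℝ)⁻¹)|
        = (b:ℝ)⁻¹ * |∑ j ∈ Finset.range b, (deriv g ((x + j)/b) * (b:ℝ)⁻¹)| := by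
          rw [abs_mul]; congr 1
          rw [abs_of_pos]; · rw [one_div]
          · positivity
    _ ≤ (b:ℝ)⁻¹ * ∑ j ∈ Finset.range b, |deriv g ((x + j)/b) * (b:ℝ)⁻¹| := by
          gcongr; exact Finset.abs_sum_le_sum_abs _ _
    _ ≤ (b:ℝ)⁻¹ * ∑ _j ∈ Finset.range b, M * (b:ℝ)⁻¹ := by
          gcongr with j hj
          rw [abs_mul, abs_of_pos (inv_pos.mpr hb0)]
          gcongr
          exact hM _
    _ = M * (b:ℝ)⁻¹ := by
          rw [Finset.sum_const, Finset.card_range, nsmul_eq_mul]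
          field_simp
  -- combine
  have h8 : Cnorm (PFc b g) ≤ M * (b:ℝ)⁻¹ + M * (b:ℝ)⁻¹ := by
    unfold Cnorm
    gcongr
    · exact ciSup_le hsup1
    · exact ciSup_le hsup2
  have h9 : 0 ≤ ⨆ x : ℝ, |g x| := Real.iSup_nonneg fun x => abs_nonneg _
  have h10 : 2 * (b:ℝ)⁻¹ * Cnorm g = 2 * (b:ℝ)⁻¹ * (⨆ x : ℝ, |g x|) + 2 * (b:ℝ)⁻¹ * M := by
    unfold Cnorm; rw [← hMdef]; ring
  have hbinv : 0 ≤ (b:ℝ)⁻¹ := le_of_lt (inv_pos.mpr hb0)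
  nlinarith [h8, h9, hbinv]
end

section
/- For every k ≥ 1, every finite sequence of integers b_1, …, b_k all ≥ 2, and every g ∈ C¹(S¹) with ∫ g dx = 0, one has ‖T̂*_{b_1} ⋯ T̂*_{b_k} g‖ ≤ 2 · 2^{−k} ‖g‖, where ‖h‖ := sup|h| + sup|h'|. -/
/-!
Setting: the circle `S¹ = ℝ/ℤ` with Lebesgue (Haar) probability measure, realized as
`1`-periodic functions on `ℝ` together with Lebesgue measure restricted to `(0, 1]`.
For an integer `b ≥ 2`, the map `T_b x = bx (mod 1)` lifts to `x ↦ b * x` on `ℝ`, and its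
Perron–Frobenius operator (the `L²`-adjoint of the Koopman operator `g ↦ g ∘ T_b`) is
`(T̂*_b g)(x) = (1/b) ∑_{j<b} g((x+j)/b)`.
-/

open MeasureTheory ProbabilityTheory Filter Function
open scoped ENNReal Topology

-- Lipschitz estimate from deriv bound
lemma lip_of_deriv_bound {g : ℝ → ℝ} (hg : Differentiable ℝ g) {M : ℝ}
    (hM : ∀ x, |deriv g x| ≤ M) (s t : ℝ) : |g s - g t| ≤ M * |s - t| := by
  have := Convex.norm_image_sub_le_of_norm_deriv_le (f := g) (s := Set.univ)
    (fun x _ => hg.differentiableAt) (fun x _ => hM x) convex_univ (Set.mem_univ t) (Set.mem_univ s)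
  simpa [Real.norm_eq_abs] using this

lemma periodic_deriv {g : ℝ → ℝ} (hg : Periodic g 1) : Periodic (deriv g) 1 := by
  intro x
  have : deriv (fun y => g (y + 1)) x = deriv g (x + 1) := by
    simpa using deriv_comp_add_const g 1 x
  rw [← this]
  congr 1
  ext y
  exact hg y

lemma bddAbove_abs_range {f : ℝ → ℝ} (hf : Continuous f) (hp : Periodic f 1) :
    BddAbove (Set.range fun x => |f x|) := by
  have hcomp : IsCompact ((fun x => |f x|) '' Set.Icc (0:ℝ) 1) :=
    (isCompact_Icc).image (hf.abs)
  refine hcomp.bddAbove.mono ?_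
  rintro y ⟨x, rfl⟩
  refine ⟨Int.fract x, ⟨(Int.fract_nonneg x), (Int.fract_lt_one x).le⟩, ?_⟩
  have hfr : f (Int.fract x) = f x := by
    rw [Int.fract]
    simpa using hp.sub_int_mul_eq (x := x) (n := ⌊x⌋)
  show |f (Int.fract x)| = |f x|
  rw [hfr]


lemma PFc_contDiff {g : ℝ → ℝ} (hg : ContDiff ℝ 1 g) (b : ℕ) : ContDiff ℝ 1 (PFc b g) := by
  unfold PFc
  exact contDiff_const.mul (ContDiff.sum fun j _ =>
    hg.comp ((contDiff_id.add contDiff_const).div_const _))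

lemma PFc_hasDerivAt {g : ℝ → ℝ} (hg : Differentiable ℝ g) (b : ℕ) (x : ℝ) :
    HasDerivAt (PFc b g)
      ((1/(b:ℝ)) * ∑ j ∈ Finset.range b, deriv g ((x + j)/b) * (1/(b:ℝ))) x := by
  have h : ∀ j ∈ Finset.range b,
      HasDerivAt (fun y : ℝ => g ((y + (j:ℝ))/b)) (deriv g ((x+j)/b) * (1/(b:ℝ))) x := by
    intro j _
    have inner : HasDerivAt (fun y : ℝ => (y + (j:ℝ))/(b:ℝ)) (1/(b:ℝ)) x := by
      simpa using ((hasDerivAt_id x).add_const (j:ℝ)).div_const (b:ℝ)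
    exact ((hg ((x+j)/b)).hasDerivAt.comp x inner)
  have hsum := HasDerivAt.fun_sum h
  exact hsum.const_mul (1/(b:ℝ))

lemma PFc_periodic {g : ℝ → ℝ} (hg : Periodic g 1) {b : ℕ} (hb : 1 ≤ b) :
    Periodic (PFc b g) 1 := by
  intro x
  have hb0 : (b:ℝ) ≠ 0 := Nat.cast_ne_zero.mpr (by omega)
  unfold PFc
  congr 1
  set f : ℕ → ℝ := fun i => g ((x + i)/b) with hf
  have e0 : ∑ j ∈ Finset.range b, g ((x + 1 + j)/b) = ∑ j ∈ Finset.range b, f (j+1) := by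
    refine Finset.sum_congr rfl fun j _ => ?_
    simp only [hf]
    push_cast
    ring_nf
  have e1 : ∑ j ∈ Finset.range (b+1), f j = (∑ j ∈ Finset.range b, f (j+1)) + f 0 :=
    Finset.sum_range_succ' f b
  have e2 : ∑ j ∈ Finset.range (b+1), f j = (∑ j ∈ Finset.range b, f j) + f b :=
    Finset.sum_range_succ f b
  have e3 : f b = f 0 := by
    show g ((x + (b:ℝ))/b) = g ((x + (0:ℕ))/b)
    have hx : (x + (b:ℝ))/b = x/b + 1 := by field_simp
    rw [hx, hg (x/b)]
    norm_num
  rw [e0]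
  linarith [e1, e2, e3]

lemma PFc_mean {g : ℝ → ℝ} (hg : Continuous g) {b : ℕ} (hb : 1 ≤ b)
    (h0 : ∫ x in Set.Ioc (0:ℝ) 1, g x = 0) :
    ∫ x in Set.Ioc (0:ℝ) 1, PFc b g x = 0 := by
  have hb0 : (b:ℝ) ≠ 0 := Nat.cast_ne_zero.mpr (by omega)
  have h0' : ∫ x in (0:ℝ)..1, g x = 0 := by
    rw [intervalIntegral.integral_of_le zero_le_one]; exact h0
  have hcont : ∀ j : ℕ, Continuous fun x : ℝ => g ((x + j)/b) :=
    fun j => hg.comp (by continuity)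
  have goal' : ∫ x in (0:ℝ)..1, PFc b g x = 0 := by
    have step1 : ∫ x in (0:ℝ)..1, PFc b g x
        = (1/(b:ℝ)) * ∑ j ∈ Finset.range b, ∫ x in (0:ℝ)..1, g ((x + j)/b) := by
      unfold PFc
      rw [intervalIntegral.integral_const_mul, intervalIntegral.integral_finset_sum]
      intro j _
      exact (hcont j).intervalIntegrable _ _
    have step2 : ∀ j : ℕ, (∫ x in (0:ℝ)..1, g ((x + j)/b))
        = (b:ℝ) * ∫ t in ((j:ℝ)/b)..(((j:ℝ)+1)/b), g t := by
      intro j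
      have : (∫ x in (0:ℝ)..1, g ((x + j)/b))
          = ∫ x in ((0:ℝ)+j)..(1+(j:ℝ)), g (x/b) := by
        exact intervalIntegral.integral_comp_add_right (fun y => g (y/b)) (j:ℝ)
      rw [this, intervalIntegral.integral_comp_div (f := g) hb0]
      rw [smul_eq_mul]
      ring_nf
    have step3 : ∑ j ∈ Finset.range b, ∫ t in ((j:ℝ)/b)..(((j:ℝ)+1)/b), g t
        = ∫ t in (0:ℝ)..1, g t := by
      have := intervalIntegral.sum_integral_adjacent_intervals
        (a := fun j : ℕ => (j:ℝ)/b) (n := b) (f := g) (μ := volume)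
        (fun k _ => hg.intervalIntegrable _ _)
      rw [show ((0:ℕ):ℝ)/(b:ℝ) = 0 by norm_num, show ((b:ℕ):ℝ)/(b:ℝ) = 1 by field_simp] at this
      rw [← this]
      refine Finset.sum_congr rfl fun j _ => ?_
      push_cast
      ring_nf
    rw [step1]
    have : ∑ j ∈ Finset.range b, ∫ x in (0:ℝ)..1, g ((x + j)/b)
        = ∑ j ∈ Finset.range b, (b:ℝ) * ∫ t in ((j:ℝ)/b)..(((j:ℝ)+1)/b), g t :=
      Finset.sum_congr rfl fun j _ => step2 j
    rw [this, ← Finset.mul_sum, step3, h0']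
    ring
  rw [← intervalIntegral.integral_of_le zero_le_one]
  exact goal'

lemma deriv_PFc_bound {g : ℝ → ℝ} (hg : ContDiff ℝ 1 g) {M : ℝ} (hM : ∀ x, |deriv g x| ≤ M)
    {b : ℕ} (hb : 1 ≤ b) (x : ℝ) : |deriv (PFc b g) x| ≤ M / b := by
  have hb0 : (0:ℝ) < (b:ℝ) := by exact_mod_cast Nat.pos_of_ne_zero (by omega)
  rw [(PFc_hasDerivAt (hg.differentiable one_ne_zero) b x).deriv]
  have hbd : ∀ j ∈ Finset.range b, |deriv g ((x+j)/b) * (1/(b:ℝ))| ≤ M * (1/(b:ℝ)) := by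
    intro j _
    rw [abs_mul, abs_of_pos (show (0:ℝ) < 1/(b:ℝ) by positivity)]
    exact mul_le_mul_of_nonneg_right (hM _) (by positivity)
  have hsum : |∑ j ∈ Finset.range b, deriv g ((x+j)/b) * (1/(b:ℝ))| ≤ (b:ℝ) * (M * (1/(b:ℝ))) := by
    refine (Finset.abs_sum_le_sum_abs _ _).trans ?_
    calc ∑ j ∈ Finset.range b, |deriv g ((x+j)/b) * (1/(b:ℝ))|
        ≤ ∑ _j ∈ Finset.range b, M * (1/(b:ℝ)) := Finset.sum_le_sum hbd
      _ = (b:ℝ) * (M * (1/(b:ℝ))) := by simp [Finset.sum_const, mul_comm]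
  rw [abs_mul]
  calc |1/(b:ℝ)| * |∑ j ∈ Finset.range b, deriv g ((x+j)/b) * (1/(b:ℝ))|
      ≤ (1/(b:ℝ)) * ((b:ℝ) * (M * (1/(b:ℝ)))) := by
        rw [abs_of_pos (by positivity)]
        exact mul_le_mul_of_nonneg_left hsum (by positivity)
    _ = M / (b:ℝ) := by field_simp

lemma PFc_sup {g : ℝ → ℝ} (hper : Periodic g 1) (hg : ContDiff ℝ 1 g)
    {M : ℝ} (hM : ∀ x, |deriv g x| ≤ M)
    (h0 : ∫ x in Set.Ioc (0:ℝ) 1, g x = 0) {b : ℕ} (hb : 1 ≤ b) (x : ℝ) :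
    |PFc b g x| ≤ M / b := by
  have hb0 : (0:ℝ) < (b:ℝ) := by exact_mod_cast Nat.pos_of_ne_zero (by omega)
  have hM0 : 0 ≤ M := le_trans (abs_nonneg _) (hM 0)
  have hcont : Continuous g := hg.continuous
  set a : ℕ → ℝ := fun j => (x + j)/b with ha
  have hint : ∀ j : ℕ, IntervalIntegrable g volume (a j) (a (j+1)) :=
    fun j => hcont.intervalIntegrable _ _
  have hlen : ∀ j : ℕ, a (j+1) - a j = 1/(b:ℝ) := by
    intro j
    simp only [ha]
    push_cast
    field_simp
    ring
  -- total integral over one period is zero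
  have htot : ∑ j ∈ Finset.range b, (∫ t in a j..a (j+1), g t) = 0 := by
    have hadj := intervalIntegral.sum_integral_adjacent_intervals
      (a := a) (n := b) (f := g) (μ := volume) (fun k _ => hint k)
    rw [hadj]
    have ha0 : a 0 = x/b := by simp [ha]
    have hab : a b = x/b + 1 := by
      simp only [ha]; field_simp
    rw [ha0, hab]
    have hshift := hper.intervalIntegral_add_eq (x/b) 0
    rw [hshift]
    rw [zero_add, intervalIntegral.integral_of_le zero_le_one]
    exact h0
  -- each term of the Riemann sum
  have hsplit : ∀ j ∈ Finset.range b, (∫ t in a j..a (j+1), (g (a j) - g t))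
      = (1/(b:ℝ)) * g (a j) - ∫ t in a j..a (j+1), g t := by
    intro j _
    rw [intervalIntegral.integral_sub (intervalIntegrable_const) (hint j),
      intervalIntegral.integral_const, smul_eq_mul, hlen j]
  have hrepr : PFc b g x = ∑ j ∈ Finset.range b, ∫ t in a j..a (j+1), (g (a j) - g t) := by
    rw [Finset.sum_congr rfl hsplit, Finset.sum_sub_distrib, htot, sub_zero,
      ← Finset.mul_sum]
    rfl
  -- bound each term
  have hbound : ∀ j ∈ Finset.range b,
      |∫ t in a j..a (j+1), (g (a j) - g t)| ≤ (M * (1/(b:ℝ))) * (1/(b:ℝ)) := by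
    intro j _
    have hle : a j ≤ a (j+1) := by
      have h := hlen j
      have hpos : (0:ℝ) < 1/(b:ℝ) := by positivity
      linarith
    have hb1 : ∀ t ∈ Set.uIoc (a j) (a (j+1)), ‖g (a j) - g t‖ ≤ M * (1/(b:ℝ)) := by
      intro t ht
      rw [Set.uIoc_of_le hle] at ht
      have hdist : |a j - t| ≤ 1/(b:ℝ) := by
        rw [abs_sub_comm, abs_of_pos (by linarith [ht.1])]
        linarith [ht.2, hlen j]
      calc ‖g (a j) - g t‖ = |g (a j) - g t| := rfl
        _ ≤ M * |a j - t| := lip_of_deriv_bound (hg.differentiable one_ne_zero) hM _ _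
        _ ≤ M * (1/(b:ℝ)) := mul_le_mul_of_nonneg_left hdist hM0
    have := intervalIntegral.norm_integral_le_of_norm_le_const hb1
    calc |∫ t in a j..a (j+1), (g (a j) - g t)|
        ≤ (M * (1/(b:ℝ))) * |a (j+1) - a j| := this
      _ = (M * (1/(b:ℝ))) * (1/(b:ℝ)) := by rw [hlen j, abs_of_pos (by positivity)]
  calc |PFc b g x| = |∑ j ∈ Finset.range b, ∫ t in a j..a (j+1), (g (a j) - g t)| := by
        rw [hrepr]
    _ ≤ ∑ j ∈ Finset.range b, |∫ t in a j..a (j+1), (g (a j) - g t)| :=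
        Finset.abs_sum_le_sum_abs _ _
    _ ≤ ∑ _j ∈ Finset.range b, (M * (1/(b:ℝ))) * (1/(b:ℝ)) := Finset.sum_le_sum hbound
    _ = (b:ℝ) * ((M * (1/(b:ℝ))) * (1/(b:ℝ))) := by simp [Finset.sum_const, mul_comm]
    _ = M / (b:ℝ) := by field_simp



lemma key_induction (L : ℝ) (hL0 : 0 ≤ L) :
    ∀ (l : List ℕ), (∀ b ∈ l, 2 ≤ b) → ∀ (g : ℝ → ℝ), Periodic g 1 → ContDiff ℝ 1 g →
    (∫ x in Set.Ioc (0:ℝ) 1, g x = 0) → (∀ x, |deriv g x| ≤ L) →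
    Periodic (PFcList l g) 1 ∧ ContDiff ℝ 1 (PFcList l g) ∧
    (∫ x in Set.Ioc (0:ℝ) 1, PFcList l g x = 0) ∧
    (∀ x, |deriv (PFcList l g) x| ≤ (2:ℝ)⁻¹ ^ l.length * L) ∧
    (l ≠ [] → ∀ x, |PFcList l g x| ≤ (2:ℝ)⁻¹ ^ l.length * L) := by
  intro l
  induction l with
  | nil =>
    intro _ g hper hC1 hmean hder
    refine ⟨hper, hC1, hmean, ?_, ?_⟩
    · simpa [PFcList] using hder
    · intro h; exact absurd rfl h
  | cons b l ih =>
    intro hl2 g hper hC1 hmean hder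
    obtain ⟨hper', hC1', hmean', hder', _⟩ :=
      ih (fun c hc => hl2 c (List.mem_cons_of_mem b hc)) g hper hC1 hmean hder
    have hb2 : 2 ≤ b := hl2 b List.mem_cons_self
    have hb1 : 1 ≤ b := by omega
    have hbR : (2:ℝ) ≤ (b:ℝ) := by exact_mod_cast hb2
    set h := PFcList l g with hh
    have heq : PFcList (b :: l) g = PFc b h := rfl
    set M : ℝ := (2:ℝ)⁻¹ ^ l.length * L with hM
    have hM0 : 0 ≤ M := by positivity
    have hhalf : M / (b:ℝ) ≤ (2:ℝ)⁻¹ ^ (l.length + 1) * L := by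
      have : M / (b:ℝ) ≤ M / 2 := by
        apply div_le_div_of_nonneg_left hM0 (by norm_num) hbR
      calc M / (b:ℝ) ≤ M / 2 := this
        _ = (2:ℝ)⁻¹ ^ (l.length + 1) * L := by
          rw [hM]; rw [pow_succ]; ring
    refine ⟨?_, ?_, ?_, ?_, ?_⟩
    · rw [heq]; exact PFc_periodic hper' hb1
    · rw [heq]; exact PFc_contDiff hC1' b
    · rw [heq]; exact PFc_mean hC1'.continuous hb1 hmean'
    · intro x
      rw [heq]
      calc |deriv (PFc b h) x| ≤ M / b := deriv_PFc_bound hC1' hder' hb1 x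
        _ ≤ (2:ℝ)⁻¹ ^ (l.length + 1) * L := hhalf
    · intro _ x
      rw [heq]
      calc |PFc b h x| ≤ M / b := PFc_sup hper' hC1' hder' hmean' hb1 x
        _ ≤ (2:ℝ)⁻¹ ^ (l.length + 1) * L := hhalf


/-- For every `k ≥ 1`, every finite sequence `b_1, …, b_k` of integers `≥ 2` and every
zero-mean `g ∈ C¹(S¹)`, `‖T̂*_{b_1} ⋯ T̂*_{b_k} g‖ ≤ 2 · 2^{−k} ‖g‖` in the `C¹`-norm. -/
theorem PF_contraction_list
    (l : List ℕ) (hl : l ≠ []) (hl2 : ∀ b ∈ l, 2 ≤ b)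
    (g : ℝ → ℝ) (hg_per : Periodic g 1) (hg_C1 : ContDiff ℝ 1 g)
    (hg_mean : ∫ x in Set.Ioc (0 : ℝ) 1, g x = 0) :
    Cnorm (PFcList l g) ≤ 2 * (2 : ℝ)⁻¹ ^ l.length * Cnorm g := by
  have hdc : Continuous (deriv g) := hg_C1.continuous_deriv le_rfl
  have hdper : Periodic (deriv g) 1 := periodic_deriv hg_per
  have hbdd : BddAbove (Set.range fun x => |deriv g x|) := bddAbove_abs_range hdc hdper
  set L : ℝ := ⨆ x : ℝ, |deriv g x| with hLdef
  have hL : ∀ x, |deriv g x| ≤ L := fun x => le_ciSup hbdd x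
  have hL0 : 0 ≤ L := le_trans (abs_nonneg _) (hL 0)
  obtain ⟨-, -, -, hder, hsup⟩ := key_induction L hL0 l hl2 g hg_per hg_C1 hg_mean hL
  have h1 : (⨆ x : ℝ, |PFcList l g x|) ≤ (2:ℝ)⁻¹ ^ l.length * L :=
    ciSup_le (hsup hl)
  have h2 : (⨆ x : ℝ, |deriv (PFcList l g) x|) ≤ (2:ℝ)⁻¹ ^ l.length * L :=
    ciSup_le hder
  have hLC : L ≤ Cnorm g := by
    have hnn : 0 ≤ ⨆ x : ℝ, |g x| := Real.iSup_nonneg fun x => abs_nonneg _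
    rw [Cnorm]
    linarith
  have hfac : 0 ≤ 2 * (2:ℝ)⁻¹ ^ l.length := by positivity
  calc Cnorm (PFcList l g) ≤ (2:ℝ)⁻¹ ^ l.length * L + (2:ℝ)⁻¹ ^ l.length * L :=
        add_le_add h1 h2
    _ = 2 * (2:ℝ)⁻¹ ^ l.length * L := by ring
    _ ≤ 2 * (2:ℝ)⁻¹ ^ l.length * Cnorm g := mul_le_mul_of_nonneg_left hLC hfac
end

section
/- Let ε > 0, δ > 0, let L ≥ 2 be an integer with L > 2/ε, and let u : S¹ → ℝ be continuous. Suppose there exist x, y ∈ S¹ such that min_{z ∈ [x, x+ε]} u(z) > δ/4 + max_{z ∈ [y, y+ε]} u(z). Then for every g ∈ L²(S¹, Leb) that is measurable with respect to T_L^{-1}(Borel) (equivalently, g(z + 1/L) = g(z) for Lebesgue-almost every z), one has ‖u − g‖²_{L²} ≥ δ²ε/64. -/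
/-!
Setting: the circle `S¹ = ℝ/ℤ` with Lebesgue (Haar) probability measure, realized as
`1`-periodic functions on `ℝ` together with Lebesgue measure restricted to `(0, 1]`.
For an integer `b ≥ 2`, the map `T_b x = bx (mod 1)` lifts to `x ↦ b * x` on `ℝ`, and its
Perron–Frobenius operator (the `L²`-adjoint of the Koopman operator `g ↦ g ∘ T_b`) is
`(T̂*_b g)(x) = (1/b) ∑_{j<b} g((x+j)/b)`.
-/

open MeasureTheory ProbabilityTheory Filter Function
open scoped ENNReal Topology

set_option maxHeartbeats 1000000 in
/-- If `u : S¹ → ℝ` is continuous and on some arc `[x, x+ε]` it exceeds its values on another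
arc `[y, y+ε]` by more than `δ/4`, then every `g ∈ L²(S¹)` measurable with respect to
`T_L^{-1}(Borel)` (equivalently, `(1/L)`-periodic almost everywhere), with `L ≥ 2`, `L > 2/ε`,
satisfies `‖u − g‖²_{L²} ≥ δ²ε/64`. -/
theorem dist_sq_to_pullback_measurable_ge
    (ε δ : ℝ) (hε : 0 < ε) (hδ : 0 < δ)
    (L : ℕ) (hL2 : 2 ≤ L) (hLε : 2 / ε < (L : ℝ))
    (u : ℝ → ℝ) (hu_cont : Continuous u) (hu_per : Periodic u 1)
    (x y : ℝ)
    (hxy : ∀ z ∈ Set.Icc x (x + ε), ∀ w ∈ Set.Icc y (y + ε), δ / 4 + u w < u z)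
    (g : ℝ → ℝ) (hg_per : Periodic g 1) (hg_L2 : MemLp g 2 circleMeasure)
    (hg_meas : ∀ᵐ z ∂(volume : Measure ℝ), g (z + 1 / L) = g z) :
    δ ^ 2 * ε / 64 ≤ ∫ z, (u z - g z) ^ 2 ∂circleMeasure := by
  have hL0 : (0:ℝ) < L := by positivity
  set c : ℝ := 1 / (L:ℝ) with hc_def
  have hc : 0 < c := by positivity
  have hLc : (L:ℝ) * c = 1 := by rw [hc_def, mul_one_div, div_self hL0.ne']
  have hεL : 2 < ε * L := by rw [div_lt_iff₀ hε] at hLε; linarith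
  set K : ℕ := ⌊ε * L⌋₊ with hK_def
  have hKle : (K:ℝ) ≤ ε * L := Nat.floor_le (by positivity)
  have hKge : ε * L / 2 ≤ (K:ℝ) := by
    have := Nat.sub_one_lt_floor (ε * (L:ℝ))
    rw [← hK_def] at this
    linarith
  have hKc : (K:ℝ) * c ≤ ε := by
    rw [hc_def]
    rw [mul_one_div, div_le_iff₀ hL0]
    linarith
  have hKc2 : ε/2 ≤ (K:ℝ) * c := by
    rw [hc_def, mul_one_div, le_div_iff₀ hL0]
    linarith
  have hε1 : ε ≤ 1 := by
    by_contra h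
    push_neg at h
    have hw : y + Int.fract (x - y) ∈ Set.Icc y (y + ε) := by
      constructor
      · linarith [Int.fract_nonneg (x - y)]
      · linarith [Int.fract_lt_one (x - y)]
    have hxm : x ∈ Set.Icc x (x + ε) := ⟨le_refl _, by linarith⟩
    have := hxy x hxm _ hw
    have heq : u (y + Int.fract (x - y)) = u x := by
      have : y + Int.fract (x - y) = x - (⌊x - y⌋ : ℝ) := by
        rw [Int.fract]; ring
      rw [this]
      simpa using hu_per.sub_int_mul_eq (x := x) ⌊x - y⌋
    rw [heq] at this
    linarith
  -- measurable representative of g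
  obtain ⟨g0, hg0sm, hgg0⟩ := hg_L2.1
  set v : ℝ → ℝ := fun z => g0 (1 - Int.fract (-z)) with hv_def
  have hvm : Measurable v := by
    exact hg0sm.measurable.comp ((measurable_fract.comp measurable_neg).const_sub 1)
  -- a.e. shift of a.e. properties
  have aeshift : ∀ (P : ℝ → Prop) (s : ℝ), (∀ᵐ z ∂(volume : Measure ℝ), P z) →
      (∀ᵐ z ∂(volume : Measure ℝ), P (z + s)) := by
    intro P s h
    rw [ae_iff] at h ⊢
    have hsub : {z : ℝ | ¬ P (z + s)} ⊆ (fun z : ℝ => z + s) ⁻¹' (toMeasurable volume {z | ¬ P z}) := fun z hz =>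
      subset_toMeasurable _ _ hz
    refine le_antisymm ?_ zero_le
    calc volume {z : ℝ | ¬ P (z + s)} ≤ volume ((fun z : ℝ => z + s) ⁻¹' (toMeasurable volume {z | ¬ P z})) :=
          measure_mono hsub
    _ = volume (toMeasurable volume {z | ¬ P z}) :=
          (measurePreserving_add_right volume s).measure_preimage
            (measurableSet_toMeasurable _ _).nullMeasurableSet
    _ = 0 := by rw [measure_toMeasurable]; exact h
  -- v = g a.e.
  have hv : ∀ᵐ z ∂(volume : Measure ℝ), v z = g z := by
    have hN : volume ({w | g w ≠ g0 w} ∩ Set.Ioc (0:ℝ) 1) = 0 := by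
      have h0 : (volume.restrict (Set.Ioc (0:ℝ) 1)) {w | g w ≠ g0 w} = 0 := hgg0
      exact le_antisymm (h0 ▸ Measure.le_restrict_apply _ _) zero_le
    set N1 := toMeasurable volume ({w | g w ≠ g0 w} ∩ Set.Ioc (0:ℝ) 1) with hN1_def
    have hN1 : volume N1 = 0 := by rw [hN1_def, measure_toMeasurable]; exact hN
    rw [ae_iff]
    have hsub : {z : ℝ | ¬ v z = g z} ⊆ ⋃ (n : ℤ), (fun z : ℝ => z - (n:ℝ)) ⁻¹' N1 := by
      intro z hz
      simp only [Set.mem_setOf_eq] at hz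
      set r := 1 - Int.fract (-z) with hr_def
      have hrz : z - r = ((-1 - ⌊-z⌋ : ℤ) : ℝ) := by
        rw [hr_def, Int.fract]; push_cast; ring
      have hr_mem : r ∈ Set.Ioc (0:ℝ) 1 := by
        constructor
        · have := Int.fract_lt_one (-z); linarith
        · have := Int.fract_nonneg (-z); linarith
      have hgr : g r = g z := by
        have : r = z - ((-1 - ⌊-z⌋ : ℤ) : ℝ) := by rw [← hrz]; ring
        rw [this]
        simpa using hg_per.sub_int_mul_eq (x := z) (-1 - ⌊-z⌋)
      have hbad : g r ≠ g0 r := by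
        intro hcon
        apply hz
        rw [hv_def]
        simp only [← hr_def]
        rw [← hcon, hgr]
      refine Set.mem_iUnion.2 ⟨-1 - ⌊-z⌋, ?_⟩
      have : z - ((-1 - ⌊-z⌋ : ℤ) : ℝ) = r := by rw [← hrz]; ring
      simp only [Set.mem_preimage, this]
      exact subset_toMeasurable _ _ ⟨hbad, hr_mem⟩
    refine le_antisymm ?_ zero_le
    calc volume {z : ℝ | ¬ v z = g z} ≤ volume (⋃ (n : ℤ), (fun z : ℝ => z - (n:ℝ)) ⁻¹' N1) :=
          measure_mono hsub
    _ ≤ ∑' (n : ℤ), volume ((fun z : ℝ => z - (n:ℝ)) ⁻¹' N1) := measure_iUnion_le _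
    _ = ∑' (_ : ℤ), (0:ℝ≥0∞) := by
        congr 1
        funext n
        rw [(measurePreserving_sub_right volume ((n:ℝ))).measure_preimage
          (measurableSet_toMeasurable _ _).nullMeasurableSet]
        exact hN1
    _ = 0 := by simp
  -- a.e. periodicity of v with period c
  have hv1 : ∀ᵐ z ∂(volume : Measure ℝ), v (z + c) = v z := by
    have h1 := aeshift (fun z => v z = g z) c hv
    filter_upwards [h1, hg_meas, hv] with z h1 h2 h3
    rw [h1, hc_def] at *
    rw [h2, ← h3]
  have hvLadd : ∀ j : ℤ, ∀ᵐ z ∂(volume : Measure ℝ), v (z + j * c) = v z := by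
    intro j
    induction j using Int.induction_on with
    | zero => simp
    | succ n ih =>
      have h1 := aeshift (fun z => v (z + n * c) = v z) c ih
      filter_upwards [h1, hv1] with z h1 h2
      push_cast
      have : z + ((n:ℝ)+1) * c = (z + c) + (n:ℝ) * c := by ring
      rw [this, h1, h2]
    | pred n ih =>
      have h1 := aeshift (fun z => v (z + (-n:ℤ) * c) = v z) (-c) ih
      have h2 := aeshift (fun z => v (z + c) = v z) (-c) hv1
      filter_upwards [h1, h2] with z h1 h2
      have e2 : z + -c + c = z := by ring
      rw [e2] at h2
      push_cast at h1 ⊢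
      have : z + (-(n:ℝ)-1) * c = (z + -c) + (-(n:ℝ)) * c := by ring
      rw [this, h1, ← h2]
  have hvL : ∀ j : ℤ, ∀ᵐ z ∂(volume : Measure ℝ), v (z - j * c) = v z := by
    intro j
    filter_upwards [hvLadd (-j)] with z hz
    have : z - (j:ℝ) * c = z + ((-j : ℤ):ℝ) * c := by push_cast; ring
    rw [this, hz]
  have hvint : ∀ q : ℤ, ∀ᵐ z ∂(volume : Measure ℝ), v (z - q) = v z := by
    intro q
    filter_upwards [hvL (q * L)] with z hz
    have : z - ((q * (L:ℤ) : ℤ):ℝ) * c = z - q := by push_cast; rw [mul_assoc, hLc]; ring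
    rwa [this] at hz
  -- the nonnegative integrand
  set Fm : ℝ → ℝ≥0∞ := fun z => ENNReal.ofReal ((u z - v z)^2) with hFm_def
  have hFm : Measurable Fm :=
    ENNReal.measurable_ofReal.comp ((hu_cont.measurable.sub hvm).pow_const 2)
  -- translation of set lintegrals
  have htr : ∀ (a b s : ℝ), ∫⁻ z in Set.Ioc (a - s) (b - s), Fm z ∂volume
      = ∫⁻ z in Set.Ioc a b, Fm (z - s) ∂volume := by
    intro a b s
    have hmp : MeasurePreserving (fun z : ℝ => z - s) volume volume :=
      measurePreserving_sub_right volume s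
    conv_lhs => rw [← hmp.map_eq]
    rw [setLIntegral_map measurableSet_Ioc hFm hmp.measurable]
    have hpre : (fun z : ℝ => z - s) ⁻¹' Set.Ioc (a - s) (b - s) = Set.Ioc a b := by
      ext z
      simp only [Set.mem_preimage, Set.mem_Ioc]
      constructor <;> intro h <;> exact ⟨by linarith [h.1], by linarith [h.2]⟩
    rw [hpre]
  -- integer translation invariance of lintegral of Fm
  have hIntTrans : ∀ (a b : ℝ) (q : ℤ), ∫⁻ z in Set.Ioc a b, Fm z ∂volume
      = ∫⁻ z in Set.Ioc (a - q) (b - q), Fm z ∂volume := by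
    intro a b q
    rw [htr a b (q:ℝ)]
    refine lintegral_congr_ae (ae_restrict_of_ae ?_)
    filter_upwards [hvint q] with z hz
    have hu' : u (z - (q:ℝ)) = u z := by
      simpa using hu_per.sub_int_mul_eq (x := z) q
    simp only [hFm_def, hz, hu']
  -- the key per-piece bound
  have pieceBound : ∀ (a b : ℝ) (j : ℤ), Set.Ioc a b ⊆ Set.Icc x (x + ε) →
      Set.Ioc (a - j * c) (b - j * c) ⊆ Set.Icc y (y + ε) →
      ENNReal.ofReal (δ^2/32) * ENNReal.ofReal (b - a) ≤
        (∫⁻ z in Set.Ioc a b, Fm z ∂volume) +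
          ∫⁻ z in Set.Ioc (a - j * c) (b - j * c), Fm z ∂volume := by
    intro a b j hI hJ
    have h1 : ∫⁻ z in Set.Ioc (a - (j:ℝ)*c) (b - (j:ℝ)*c), Fm z ∂volume
        = ∫⁻ z in Set.Ioc a b, Fm (z - (j:ℝ)*c) ∂volume := htr a b ((j:ℝ)*c)
    rw [h1, ← lintegral_add_left hFm]
    have hae : ∀ᵐ z ∂(volume.restrict (Set.Ioc a b)),
        ENNReal.ofReal (δ^2/32) ≤ Fm z + Fm (z - (j:ℝ)*c) := by
      filter_upwards [ae_restrict_mem measurableSet_Ioc, ae_restrict_of_ae (hvL j)]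
        with z hzm hzv
      have hzI : z ∈ Set.Icc x (x + ε) := hI hzm
      obtain ⟨hz1, hz2⟩ := hzm
      have hzJ : z - (j:ℝ)*c ∈ Set.Icc y (y + ε) :=
        hJ ⟨by linarith, by linarith⟩
      have hkey := hxy z hzI _ hzJ
      have hAeq : Fm z + Fm (z - (j:ℝ)*c)
          = ENNReal.ofReal ((u z - v z)^2 + (u (z - (j:ℝ)*c) - v z)^2) := by
        simp only [hFm_def, hzv]
        exact (ENNReal.ofReal_add (sq_nonneg _) (sq_nonneg _)).symm
      rw [hAeq]
      apply ENNReal.ofReal_le_ofReal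
      nlinarith [sq_nonneg (u z - v z + (u (z - (j:ℝ)*c) - v z)),
        sq_nonneg (u z - u (z - (j:ℝ)*c) - δ/4),
        mul_pos hδ (show (0:ℝ) < u z - u (z - (j:ℝ)*c) - δ/4 by linarith)]
    calc ENNReal.ofReal (δ^2/32) * ENNReal.ofReal (b - a)
        = ∫⁻ _ in Set.Ioc a b, ENNReal.ofReal (δ^2/32) ∂volume := by
          rw [setLIntegral_const, Real.volume_Ioc]
      _ ≤ ∫⁻ z in Set.Ioc a b, (Fm z + Fm (z - (j:ℝ)*c)) ∂volume := lintegral_mono_ae hae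
  -- the grid data
  set θ : ℝ := Int.fract ((L:ℝ) * (x - y)) with hθ_def
  set m : ℤ := ⌊(L:ℝ) * (x - y)⌋ with hm_def
  have hθ0 : 0 ≤ θ := Int.fract_nonneg _
  have hθ1 : θ ≤ 1 := (Int.fract_lt_one _).le
  have hx_eq : x = y + θ * c + m * c := by
    have hθm : θ + (m:ℝ) = (L:ℝ)*(x-y) := by
      rw [hθ_def, hm_def, Int.fract]; ring
    have h2 : (θ + (m:ℝ)) * c = x - y := by
      rw [hθm]
      calc (L:ℝ)*(x-y)*c = (x-y)*((L:ℝ)*c) := by ring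
        _ = x - y := by rw [hLc]; ring
    nlinarith [h2]
  -- splitting an interval into cells
  have hsplit : ∀ (t : ℝ) (n : ℕ), ∫⁻ z in Set.Ioc t (t + n * c), Fm z ∂volume
      = ∑ k ∈ Finset.range n,
          ∫⁻ z in Set.Ioc (t + k * c) (t + ((k:ℝ) + 1) * c), Fm z ∂volume := by
    intro t n
    induction n with
    | zero => simp
    | succ n ih =>
      rw [Finset.sum_range_succ, ← ih]
      have h1 : t ≤ t + n * c := by
        have := mul_nonneg (Nat.cast_nonneg (α := ℝ) n) hc.le; linarith
      have h2 : t + (n:ℝ) * c ≤ t + ((n:ℝ) + 1) * c := by nlinarith [hc.le]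
      rw [Nat.cast_add, Nat.cast_one,
        ← Set.Ioc_union_Ioc_eq_Ioc h1 h2,
        lintegral_union measurableSet_Ioc (Set.Ioc_disjoint_Ioc_of_le le_rfl)]
  -- per-cell bound
  have hcellB : ∀ k ∈ Finset.range K, ENNReal.ofReal (δ^2/32) * ENNReal.ofReal c ≤
      (∫⁻ z in Set.Ioc (x + k * c) (x + ((k:ℝ) + 1) * c), Fm z ∂volume) +
      ∫⁻ z in Set.Ioc (y + k * c) (y + ((k:ℝ) + 1) * c), Fm z ∂volume := by
    intro k hk
    have hkK : (k:ℝ) + 1 ≤ K := by exact_mod_cast Finset.mem_range.1 hk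
    have hk0 : 0 ≤ (k:ℝ) := Nat.cast_nonneg k
    have hkc0 : 0 ≤ (k:ℝ) * c := mul_nonneg hk0 hc.le
    have hmono : ∀ r s : ℝ, r ≤ s → r * c ≤ s * c := fun r s h =>
      mul_le_mul_of_nonneg_right h hc.le
    have hKcc : ((k:ℝ) + 1) * c ≤ ε := le_trans (hmono _ _ hkK) hKc
    have e1 : x + (k:ℝ)*c - (m:ℝ)*c = y + ((k:ℝ)+θ)*c := by rw [hx_eq]; ring
    have e2 : x + ((k:ℝ)+1-θ)*c - (m:ℝ)*c = y + ((k:ℝ)+1)*c := by rw [hx_eq]; ring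
    have e3 : x + ((k:ℝ)+1-θ)*c - ((m+1:ℤ):ℝ)*c = y + (k:ℝ)*c := by
      push_cast; rw [hx_eq]; ring
    have e4 : x + ((k:ℝ)+1)*c - ((m+1:ℤ):ℝ)*c = y + ((k:ℝ)+θ)*c := by
      push_cast; rw [hx_eq]; ring
    have hIc1 : Set.Ioc (x + (k:ℝ)*c) (x + ((k:ℝ)+1-θ)*c) ⊆ Set.Icc x (x + ε) := by
      intro z hz
      obtain ⟨hz1, hz2⟩ := hz
      have h3 : ((k:ℝ)+1-θ)*c ≤ ε := le_trans (hmono _ _ (by linarith)) hKcc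
      exact ⟨by linarith, by linarith⟩
    have hIc2 : Set.Ioc (x + ((k:ℝ)+1-θ)*c) (x + ((k:ℝ)+1)*c) ⊆ Set.Icc x (x + ε) := by
      intro z hz
      obtain ⟨hz1, hz2⟩ := hz
      have h4 : 0 ≤ ((k:ℝ)+1-θ)*c := mul_nonneg (by linarith) hc.le
      exact ⟨by linarith, by linarith⟩
    have hJc1 : Set.Ioc (x + (k:ℝ)*c - (m:ℝ)*c) (x + ((k:ℝ)+1-θ)*c - (m:ℝ)*c)
        ⊆ Set.Icc y (y + ε) := by
      rw [e1, e2]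
      intro z hz
      obtain ⟨hz1, hz2⟩ := hz
      have h4 : 0 ≤ ((k:ℝ)+θ)*c := mul_nonneg (by linarith) hc.le
      exact ⟨by linarith, by linarith⟩
    have hJc2 : Set.Ioc (x + ((k:ℝ)+1-θ)*c - ((m+1:ℤ):ℝ)*c) (x + ((k:ℝ)+1)*c - ((m+1:ℤ):ℝ)*c)
        ⊆ Set.Icc y (y + ε) := by
      rw [e3, e4]
      intro z hz
      obtain ⟨hz1, hz2⟩ := hz
      have h3 : ((k:ℝ)+θ)*c ≤ ε := le_trans (hmono _ _ (by linarith)) hKcc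
      exact ⟨by linarith, by linarith⟩
    have hA := pieceBound (x + (k:ℝ)*c) (x + ((k:ℝ)+1-θ)*c) m hIc1 hJc1
    have hB := pieceBound (x + ((k:ℝ)+1-θ)*c) (x + ((k:ℝ)+1)*c) (m+1) hIc2 hJc2
    rw [e1, e2] at hA
    rw [e3, e4] at hB
    have hle1 : x + (k:ℝ)*c ≤ x + ((k:ℝ)+1-θ)*c := by
      have := hmono _ _ (show (k:ℝ) ≤ (k:ℝ)+1-θ by linarith); linarith
    have hle2 : x + ((k:ℝ)+1-θ)*c ≤ x + ((k:ℝ)+1)*c := by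
      have := hmono _ _ (show (k:ℝ)+1-θ ≤ (k:ℝ)+1 by linarith); linarith
    have hle3 : y + (k:ℝ)*c ≤ y + ((k:ℝ)+θ)*c := by
      have := hmono _ _ (show (k:ℝ) ≤ (k:ℝ)+θ by linarith); linarith
    have hle4 : y + ((k:ℝ)+θ)*c ≤ y + ((k:ℝ)+1)*c := by
      have := hmono _ _ (show (k:ℝ)+θ ≤ (k:ℝ)+1 by linarith); linarith
    have hxcell : ∫⁻ z in Set.Ioc (x + (k:ℝ)*c) (x + ((k:ℝ)+1)*c), Fm z ∂volume
        = (∫⁻ z in Set.Ioc (x + (k:ℝ)*c) (x + ((k:ℝ)+1-θ)*c), Fm z ∂volume)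
          + ∫⁻ z in Set.Ioc (x + ((k:ℝ)+1-θ)*c) (x + ((k:ℝ)+1)*c), Fm z ∂volume := by
      rw [← Set.Ioc_union_Ioc_eq_Ioc hle1 hle2,
        lintegral_union measurableSet_Ioc (Set.Ioc_disjoint_Ioc_of_le le_rfl)]
    have hycell : ∫⁻ z in Set.Ioc (y + (k:ℝ)*c) (y + ((k:ℝ)+1)*c), Fm z ∂volume
        = (∫⁻ z in Set.Ioc (y + (k:ℝ)*c) (y + ((k:ℝ)+θ)*c), Fm z ∂volume)
          + ∫⁻ z in Set.Ioc (y + ((k:ℝ)+θ)*c) (y + ((k:ℝ)+1)*c), Fm z ∂volume := by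
      rw [← Set.Ioc_union_Ioc_eq_Ioc hle3 hle4,
        lintegral_union measurableSet_Ioc (Set.Ioc_disjoint_Ioc_of_le le_rfl)]
    rw [hxcell, hycell]
    calc ENNReal.ofReal (δ^2/32) * ENNReal.ofReal c
        = ENNReal.ofReal (δ^2/32) * (ENNReal.ofReal ((x + ((k:ℝ)+1-θ)*c) - (x + (k:ℝ)*c))
            + ENNReal.ofReal ((x + ((k:ℝ)+1)*c) - (x + ((k:ℝ)+1-θ)*c))) := by
          rw [← ENNReal.ofReal_add (by linarith) (by linarith)]
          congr 2
          ring
      _ = ENNReal.ofReal (δ^2/32) * ENNReal.ofReal ((x + ((k:ℝ)+1-θ)*c) - (x + (k:ℝ)*c))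
          + ENNReal.ofReal (δ^2/32) * ENNReal.ofReal ((x + ((k:ℝ)+1)*c) - (x + ((k:ℝ)+1-θ)*c)) := by
          rw [mul_add]
      _ ≤ ((∫⁻ z in Set.Ioc (x + (k:ℝ)*c) (x + ((k:ℝ)+1-θ)*c), Fm z ∂volume)
            + ∫⁻ z in Set.Ioc (y + ((k:ℝ)+θ)*c) (y + ((k:ℝ)+1)*c), Fm z ∂volume)
          + ((∫⁻ z in Set.Ioc (x + ((k:ℝ)+1-θ)*c) (x + ((k:ℝ)+1)*c), Fm z ∂volume)
            + ∫⁻ z in Set.Ioc (y + (k:ℝ)*c) (y + ((k:ℝ)+θ)*c), Fm z ∂volume) := add_le_add hA hB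
      _ = _ := by ring
  -- summing the cells
  have hcells : ENNReal.ofReal (δ^2/32) * ENNReal.ofReal ((K:ℝ) * c) ≤
      (∫⁻ z in Set.Ioc x (x + (K:ℝ) * c), Fm z ∂volume)
        + ∫⁻ z in Set.Ioc y (y + (K:ℝ) * c), Fm z ∂volume := by
    rw [hsplit x K, hsplit y K, ← Finset.sum_add_distrib]
    have hconst : ENNReal.ofReal (δ^2/32) * ENNReal.ofReal ((K:ℝ) * c)
        = ∑ _k ∈ Finset.range K, ENNReal.ofReal (δ^2/32) * ENNReal.ofReal c := by
      rw [Finset.sum_const, Finset.card_range, nsmul_eq_mul,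
        ENNReal.ofReal_mul (by positivity), ENNReal.ofReal_natCast]
      ring
    rw [hconst]
    exact Finset.sum_le_sum hcellB
  -- translate the y-window by an integer to sit inside (x, x+1]
  set n0 : ℤ := ⌈x - y⌉ with hn0_def
  have hn0a : x ≤ y + (n0:ℝ) := by
    have := Int.le_ceil (x - y); rw [← hn0_def] at this; linarith
  have hn0b : y + (n0:ℝ) < x + 1 := by
    have := Int.ceil_lt_add_one (x - y); rw [← hn0_def] at this; linarith
  have hyt : ∫⁻ z in Set.Ioc y (y + (K:ℝ)*c), Fm z ∂volume
      = ∫⁻ z in Set.Ioc (y + (n0:ℝ)) (y + (n0:ℝ) + (K:ℝ)*c), Fm z ∂volume := by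
    rw [hIntTrans (y + (n0:ℝ)) (y + (n0:ℝ) + (K:ℝ)*c) n0]
    have a1 : y + (n0:ℝ) - (n0:ℝ) = y := by ring
    have a2 : y + (n0:ℝ) + (K:ℝ)*c - (n0:ℝ) = y + (K:ℝ)*c := by ring
    rw [a1, a2]
  have hS1sub : Set.Ioc x (x + (K:ℝ)*c) ⊆ Set.Ioc x (x + 1) :=
    Set.Ioc_subset_Ioc_right (by linarith)
  have hupper : y + (n0:ℝ) + (K:ℝ)*c ≤ x + 1 := by
    by_contra h
    push_neg at h
    have hw : x + 1 - (n0:ℝ) ∈ Set.Icc y (y + ε) := ⟨by linarith, by linarith⟩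
    have hx0 : x ∈ Set.Icc x (x + ε) := ⟨le_refl _, by linarith⟩
    have hk := hxy x hx0 _ hw
    have heq : u (x + 1 - (n0:ℝ)) = u x := by
      have e : x + 1 - (n0:ℝ) = x - ((n0 - 1 : ℤ):ℝ) * 1 := by push_cast; ring
      rw [e, hu_per.sub_int_mul_eq]
    rw [heq] at hk; linarith
  have hS2sub : Set.Ioc (y + (n0:ℝ)) (y + (n0:ℝ) + (K:ℝ)*c) ⊆ Set.Ioc x (x + 1) := by
    intro z hz
    obtain ⟨hz1, hz2⟩ := hz
    exact ⟨by linarith, by linarith⟩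
  have hdisj : Disjoint (Set.Ioc x (x + (K:ℝ)*c))
      (Set.Ioc (y + (n0:ℝ)) (y + (n0:ℝ) + (K:ℝ)*c)) := by
    rw [Set.disjoint_left]
    intro z hz1 hz2
    obtain ⟨ha1, ha2⟩ := hz1
    obtain ⟨hb1, hb2⟩ := hz2
    have hzI : z ∈ Set.Icc x (x + ε) := ⟨ha1.le, by linarith⟩
    have hzJ : z - (n0:ℝ) ∈ Set.Icc y (y + ε) := ⟨by linarith, by linarith⟩
    have hk := hxy z hzI _ hzJ
    have heq : u (z - (n0:ℝ)) = u z := by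
      have e : z - (n0:ℝ) = z - (n0:ℝ) * 1 := by ring
      rw [e, hu_per.sub_int_mul_eq]
    rw [heq] at hk; linarith
  have hup : (∫⁻ z in Set.Ioc x (x + (K:ℝ)*c), Fm z ∂volume)
      + ∫⁻ z in Set.Ioc (y + (n0:ℝ)) (y + (n0:ℝ) + (K:ℝ)*c), Fm z ∂volume
      ≤ ∫⁻ z in Set.Ioc x (x + 1), Fm z ∂volume := by
    rw [← lintegral_union measurableSet_Ioc hdisj]
    exact lintegral_mono_set (Set.union_subset hS1sub hS2sub)
  -- move the window (x, x+1] to (0, 1]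
  set cl : ℤ := ⌈x⌉ with hcl_def
  have hcl1 : x ≤ (cl:ℝ) := Int.le_ceil x
  have hcl2 : (cl:ℝ) ≤ x + 1 := by
    have := Int.ceil_lt_add_one x; rw [← hcl_def] at this; linarith
  have hbase : ∫⁻ z in Set.Ioc x (x+1), Fm z ∂volume
      = ∫⁻ z in Set.Ioc (0:ℝ) 1, Fm z ∂volume := by
    have e1 : ∫⁻ z in Set.Ioc x (x+1), Fm z ∂volume
        = (∫⁻ z in Set.Ioc x (cl:ℝ), Fm z ∂volume)
          + ∫⁻ z in Set.Ioc (cl:ℝ) (x+1), Fm z ∂volume := by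
      rw [← Set.Ioc_union_Ioc_eq_Ioc hcl1 hcl2,
        lintegral_union measurableSet_Ioc (Set.Ioc_disjoint_Ioc_of_le le_rfl)]
    have e2 : ∫⁻ z in Set.Ioc (cl:ℝ) (x+1), Fm z ∂volume
        = ∫⁻ z in Set.Ioc ((cl:ℝ)-1) x, Fm z ∂volume := by
      rw [hIntTrans (cl:ℝ) (x+1) 1]
      have a1 : (cl:ℝ) - ((1:ℤ):ℝ) = (cl:ℝ) - 1 := by norm_num
      have a2 : x + 1 - ((1:ℤ):ℝ) = x := by norm_num
      rw [a1, a2]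
    have e3 : (∫⁻ z in Set.Ioc ((cl:ℝ)-1) x, Fm z ∂volume)
          + ∫⁻ z in Set.Ioc x (cl:ℝ), Fm z ∂volume
        = ∫⁻ z in Set.Ioc ((cl:ℝ)-1) (cl:ℝ), Fm z ∂volume := by
      rw [← Set.Ioc_union_Ioc_eq_Ioc (show (cl:ℝ)-1 ≤ x by linarith) hcl1,
        lintegral_union measurableSet_Ioc (Set.Ioc_disjoint_Ioc_of_le le_rfl)]
    have e4 : ∫⁻ z in Set.Ioc ((cl:ℝ)-1) (cl:ℝ), Fm z ∂volume
        = ∫⁻ z in Set.Ioc (0:ℝ) 1, Fm z ∂volume := by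
      rw [hIntTrans ((cl:ℝ)-1) (cl:ℝ) (cl - 1)]
      have a1 : (cl:ℝ) - 1 - ((cl - 1 : ℤ):ℝ) = 0 := by push_cast; ring
      have a2 : (cl:ℝ) - ((cl - 1 : ℤ):ℝ) = 1 := by push_cast; ring
      rw [a1, a2]
    calc ∫⁻ z in Set.Ioc x (x+1), Fm z ∂volume
        = (∫⁻ z in Set.Ioc x (cl:ℝ), Fm z ∂volume)
          + ∫⁻ z in Set.Ioc (cl:ℝ) (x+1), Fm z ∂volume := e1
      _ = (∫⁻ z in Set.Ioc ((cl:ℝ)-1) x, Fm z ∂volume)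
          + ∫⁻ z in Set.Ioc x (cl:ℝ), Fm z ∂volume := by rw [e2]; ring
      _ = ∫⁻ z in Set.Ioc ((cl:ℝ)-1) (cl:ℝ), Fm z ∂volume := e3
      _ = ∫⁻ z in Set.Ioc (0:ℝ) 1, Fm z ∂volume := e4
  -- the full lower bound in ℝ≥0∞
  have hchain : ENNReal.ofReal (δ^2 * ε / 64) ≤ ∫⁻ z, Fm z ∂circleMeasure := by
    have h1 : ENNReal.ofReal (δ^2 * ε / 64) ≤ ENNReal.ofReal (δ^2/32) * ENNReal.ofReal ((K:ℝ)*c) := by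
      rw [← ENNReal.ofReal_mul (by positivity)]
      apply ENNReal.ofReal_le_ofReal
      nlinarith [hKc2, sq_nonneg δ]
    have hcirc : ∫⁻ z, Fm z ∂circleMeasure = ∫⁻ z in Set.Ioc (0:ℝ) 1, Fm z ∂volume := by
      rw [circleMeasure]
    calc ENNReal.ofReal (δ^2*ε/64)
        ≤ ENNReal.ofReal (δ^2/32) * ENNReal.ofReal ((K:ℝ)*c) := h1
      _ ≤ (∫⁻ z in Set.Ioc x (x + (K:ℝ)*c), Fm z ∂volume)
          + ∫⁻ z in Set.Ioc y (y + (K:ℝ)*c), Fm z ∂volume := hcells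
      _ = (∫⁻ z in Set.Ioc x (x + (K:ℝ)*c), Fm z ∂volume)
          + ∫⁻ z in Set.Ioc (y + (n0:ℝ)) (y + (n0:ℝ) + (K:ℝ)*c), Fm z ∂volume := by rw [hyt]
      _ ≤ ∫⁻ z in Set.Ioc x (x+1), Fm z ∂volume := hup
      _ = ∫⁻ z in Set.Ioc (0:ℝ) 1, Fm z ∂volume := hbase
      _ = ∫⁻ z, Fm z ∂circleMeasure := hcirc.symm
  -- convert to the Bochner integral
  haveI : IsFiniteMeasure circleMeasure := by
    constructor
    rw [circleMeasure, Measure.restrict_apply_univ, Real.volume_Ioc]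
    exact ENNReal.ofReal_lt_top
  obtain ⟨C, hC⟩ := (isCompact_Icc (a := (0:ℝ)) (b := 1)).exists_bound_of_continuousOn
    hu_cont.continuousOn
  have hubd : ∀ z, ‖u z‖ ≤ C := by
    intro z
    have h1 : u (Int.fract z) = u z := by
      rw [Int.fract]
      have e : z - ((⌊z⌋:ℤ):ℝ) = z - ((⌊z⌋:ℤ):ℝ) * 1 := by ring
      rw [e, hu_per.sub_int_mul_eq]
    rw [← h1]
    exact hC _ ⟨Int.fract_nonneg z, (Int.fract_lt_one z).le⟩
  have hu2 : MemLp u 2 circleMeasure :=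
    MemLp.of_bound hu_cont.aestronglyMeasurable C (ae_of_all _ hubd)
  have hint : Integrable (fun z => (u z - g z)^2) circleMeasure := (hu2.sub hg_L2).integrable_sq
  have hvg_circ : ∀ᵐ z ∂circleMeasure, v z = g z := by
    rw [circleMeasure]; exact ae_restrict_of_ae hv
  have hFm_eq : ∫⁻ z, Fm z ∂circleMeasure
      = ∫⁻ z, ENNReal.ofReal ((u z - g z)^2) ∂circleMeasure := by
    refine lintegral_congr_ae ?_
    filter_upwards [hvg_circ] with z hz
    simp only [hFm_def, hz]
  have hfin : ∫⁻ z, ENNReal.ofReal ((u z - g z)^2) ∂circleMeasure ≠ ⊤ := by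
    have h2 := hint.2
    rw [hasFiniteIntegral_iff_norm] at h2
    have heq2 : ∫⁻ z, ENNReal.ofReal ((u z - g z)^2) ∂circleMeasure
        = ∫⁻ z, ENNReal.ofReal ‖(u z - g z)^2‖ ∂circleMeasure := by
      refine lintegral_congr fun z => ?_
      rw [Real.norm_of_nonneg (sq_nonneg _)]
    rw [heq2]
    exact h2.ne
  have heq : ∫ z, (u z - g z)^2 ∂circleMeasure
      = (∫⁻ z, ENNReal.ofReal ((u z - g z)^2) ∂circleMeasure).toReal := by
    have hsm : AEStronglyMeasurable (fun z => (u z - g z)^2) circleMeasure := by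
      exact (hu_cont.aestronglyMeasurable.sub hg_L2.1).pow 2
    rw [integral_eq_lintegral_of_nonneg_ae (ae_of_all _ (fun z => sq_nonneg _)) hsm]
  rw [heq]
  rw [hFm_eq] at hchain
  exact (ENNReal.ofReal_le_iff_le_toReal hfin).1 hchain
end

section
/- There is a constant C depending only on ‖f‖ := sup|f| + sup|f'| such that the following holds: if b ≥ 2 is an integer, K ≥ 1 and k > K are integers, and a_i = b for all i with k−K ≤ i ≤ k+2, then for j = k and j = k+1 one has ‖u_j − g‖ ≤ C · 2^{−K}, where g := ∑_{i=0}^{∞} (T̂*_b)^i f (the series converges in the norm ‖·‖). -/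
/-!
Setting: the circle `S¹ = ℝ/ℤ` with Lebesgue (Haar) probability measure, realized as
`1`-periodic functions on `ℝ` together with Lebesgue measure restricted to `(0, 1]`.
For an integer `b ≥ 2`, the map `T_b x = bx (mod 1)` lifts to `x ↦ b * x` on `ℝ`, and its
Perron–Frobenius operator (the `L²`-adjoint of the Koopman operator `g ↦ g ∘ T_b`) is
`(T̂*_b g)(x) = (1/b) ∑_{j<b} g((x+j)/b)`.
-/

open MeasureTheory ProbabilityTheory Filter Function
open scoped ENNReal Topology

/-- `g = ∑_{i=0}^∞ (T̂*_b)^i f`, defined pointwise (the series converges in `C¹`-norm). -/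
noncomputable def PFgeom (b : ℕ) (f : ℝ → ℝ) : ℝ → ℝ :=
  fun x => ∑' i : ℕ, (PFc b)^[i] f x


/-! ### Auxiliary lemmas -/

lemma PFc_one (g : ℝ → ℝ) : PFc 1 g = g := by
  funext x; simp [PFc]

lemma PFc_comp (m n : ℕ) (hm : 1 ≤ m) (hn : 1 ≤ n) (g : ℝ → ℝ) :
    PFc m (PFc n g) = PFc (m * n) g := by
  funext x
  have hm' : (m : ℝ) ≠ 0 := Nat.cast_ne_zero.mpr (by omega)
  have hn' : (n : ℝ) ≠ 0 := Nat.cast_ne_zero.mpr (by omega)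
  unfold PFc
  calc (1 / (m:ℝ)) * ∑ j ∈ Finset.range m,
        ((1 / (n:ℝ)) * ∑ l ∈ Finset.range n, g (((x + j) / m + l) / n))
      = ∑ p ∈ Finset.range m ×ˢ Finset.range n,
          (1 / ((m*n : ℕ) : ℝ)) * g ((x + (p.1 + p.2 * m)) / ((m*n : ℕ) : ℝ)) := by
        rw [Finset.sum_product, Finset.mul_sum]
        refine Finset.sum_congr rfl fun j _ => ?_
        rw [Finset.mul_sum, Finset.mul_sum]
        refine Finset.sum_congr rfl fun l _ => ?_
        push_cast
        rw [← mul_assoc]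
        congr 1
        · field_simp
        · congr 1
          field_simp
          ring
    _ = ∑ q ∈ Finset.range (m * n),
          (1 / ((m*n : ℕ) : ℝ)) * g ((x + q) / ((m*n : ℕ) : ℝ)) := by
        refine Finset.sum_nbij' (fun p => p.1 + p.2 * m) (fun q => (q % m, q / m)) ?_ ?_ ?_ ?_ ?_
        · rintro ⟨j, l⟩ hp
          simp only [Finset.mem_product, Finset.mem_range] at hp
          simp only [Finset.mem_range]
          calc j + l * m < m + l * m := by omega
            _ = (l + 1) * m := by ring
            _ ≤ n * m := Nat.mul_le_mul_right m (by omega)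
            _ = m * n := Nat.mul_comm _ _
        · intro q hq
          simp only [Finset.mem_range] at hq
          simp only [Finset.mem_product, Finset.mem_range]
          constructor
          · exact Nat.mod_lt _ (by omega)
          · exact Nat.div_lt_of_lt_mul (by omega)
        · rintro ⟨j, l⟩ hp
          simp only [Finset.mem_product, Finset.mem_range] at hp
          have h1 : (j + l * m) % m = j := by
            rw [Nat.add_mul_mod_self_right, Nat.mod_eq_of_lt hp.1]
          have h2 : (j + l * m) / m = l := by
            rw [Nat.add_mul_div_right _ _ (by omega : 0 < m), Nat.div_eq_of_lt hp.1, Nat.zero_add]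
          simp [h1, h2]
        · intro q hq
          show q % m + (q / m) * m = q
          rw [Nat.mul_comm]
          exact Nat.mod_add_div q m
        · intro p _
          push_cast
          ring_nf
    _ = (1 / ((m*n : ℕ):ℝ)) * ∑ q ∈ Finset.range (m * n), g ((x + q) / ((m*n : ℕ):ℝ)) := by
        rw [Finset.mul_sum]

lemma PFcSeg_eq (a : ℕ → ℕ) (ha : ∀ t, 1 ≤ a t) {i : ℕ} (hi : 1 ≤ i) (g : ℝ → ℝ) :
    ∀ j, PFcSeg a i j g = PFc (∏ t ∈ Finset.Icc i j, a t) g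
  | 0 => by
    have h : Finset.Icc i 0 = ∅ := by
      rw [Finset.Icc_eq_empty_iff]; omega
    rw [h, Finset.prod_empty, PFc_one]
    rfl
  | j + 1 => by
    by_cases h : i ≤ j + 1
    · have hprod : ∀ s : Finset ℕ, 1 ≤ ∏ t ∈ s, a t :=
        fun s => Finset.one_le_prod' (fun t _ => ha t)
      rw [PFcSeg, if_pos h, PFcSeg_eq a ha hi g j,
        PFc_comp _ _ (ha _) (hprod _), Finset.prod_Icc_succ_top h]
      ring_nf
    · rw [PFcSeg, if_neg h]
      have h2 : Finset.Icc i (j + 1) = ∅ := by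
        rw [Finset.Icc_eq_empty_iff]; omega
      rw [h2, Finset.prod_empty, PFc_one]
      rfl

lemma PFc_iterate (b : ℕ) (hb : 1 ≤ b) (f : ℝ → ℝ) :
    ∀ i, (PFc b)^[i] f = PFc (b ^ i) f
  | 0 => by rw [Function.iterate_zero_apply, pow_zero, PFc_one]
  | i + 1 => by
    rw [Function.iterate_succ_apply', PFc_iterate b hb f i,
      PFc_comp b (b ^ i) hb (Nat.one_le_pow _ _ (by omega)), ← pow_succ']

/-- pointwise derivative of `PFc N f`. -/
noncomputable def PFd (N : ℕ) (f : ℝ → ℝ) : ℝ → ℝ :=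
  fun x => (1 / (N : ℝ)) * ∑ j ∈ Finset.range N, deriv f ((x + j) / N) * (1 / N)

lemma PFc_hasDerivAt_s8 (f : ℝ → ℝ) (hf : ContDiff ℝ 1 f) (N : ℕ) (x : ℝ) :
    HasDerivAt (PFc N f) (PFd N f x) x := by
  unfold PFc PFd
  refine HasDerivAt.const_mul _ (HasDerivAt.fun_sum fun j _ => ?_)
  have h1 : HasDerivAt (fun x : ℝ => (x + (j : ℝ)) / N) (1 / N) x := by
    simpa using ((hasDerivAt_id x).add_const (j : ℝ)).div_const (N : ℝ)
  exact ((hf.differentiable one_ne_zero ((x + j) / N)).hasDerivAt).comp x h1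

lemma PFd_bound (f : ℝ → ℝ) {L : ℝ} (hL : ∀ x, |deriv f x| ≤ L) {N : ℕ} (hN : 1 ≤ N)
    (x : ℝ) : |PFd N f x| ≤ L / N := by
  have hN' : (0 : ℝ) < N := by exact_mod_cast hN
  have hL0 : 0 ≤ L := le_trans (abs_nonneg _) (hL 0)
  unfold PFd
  rw [abs_mul, abs_of_nonneg (by positivity : (0:ℝ) ≤ 1 / (N:ℝ))]
  calc 1 / (N:ℝ) * |∑ j ∈ Finset.range N, deriv f ((x + j) / N) * (1 / N)|
      ≤ 1 / (N:ℝ) * ∑ j ∈ Finset.range N, L * (1 / N) := by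
        refine mul_le_mul_of_nonneg_left ?_ (by positivity)
        refine le_trans (Finset.abs_sum_le_sum_abs _ _) (Finset.sum_le_sum fun j _ => ?_)
        rw [abs_mul, abs_of_nonneg (by positivity : (0:ℝ) ≤ 1 / (N:ℝ))]
        exact mul_le_mul_of_nonneg_right (hL _) (by positivity)
    _ = L / N := by
        rw [Finset.sum_const, Finset.card_range, nsmul_eq_mul]
        field_simp

lemma PFc_sup_bound (f : ℝ → ℝ) (hper : Periodic f 1) (hcont : Continuous f)
    (hmean : ∫ t in (0:ℝ)..1, f t = 0) {L : ℝ} (hL0 : 0 ≤ L)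
    (hlip : ∀ u v : ℝ, |f u - f v| ≤ L * |u - v|) {N : ℕ} (hN : 1 ≤ N) (x : ℝ) :
    |PFc N f x| ≤ L / N := by
  have hN' : (0 : ℝ) < N := by exact_mod_cast hN
  set y : ℝ := x / N with hy
  set c : ℕ → ℝ := fun j => y + j / N with hc
  have hint : ∀ t s : ℝ, IntervalIntegrable f volume t s :=
    fun t s => hcont.intervalIntegrable t s
  have h1 : ∫ t in y..(y + 1), f t = 0 := by
    rw [hper.intervalIntegral_add_eq y 0, zero_add]; exact hmean
  have hc0 : c 0 = y := by simp [hc]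
  have hcN : c N = y + 1 := by
    simp only [hc]; field_simp
  have h2 : ∑ j ∈ Finset.range N, ∫ t in (c j)..(c (j + 1)), f t = ∫ t in y..(y + 1), f t := by
    have := intervalIntegral.sum_integral_adjacent_intervals (a := c) (n := N)
      (fun k _ => hint _ _)
    rwa [hc0, hcN] at this
  have hsample : ∀ j : ℕ, (x + j) / N = c j := by
    intro j; simp only [hc, hy]; field_simp
  have hkey : PFc N f x = ∑ j ∈ Finset.range N,
      ((1 / N) * f (c j) - ∫ t in (c j)..(c (j + 1)), f t) := by
    rw [Finset.sum_sub_distrib, h2, h1, sub_zero, ← Finset.mul_sum]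
    unfold PFc
    congr 1
    exact Finset.sum_congr rfl fun j _ => by rw [hsample j]
  have hstep : ∀ j : ℕ, c (j + 1) = c j + 1 / N := by
    intro j; simp only [hc]; push_cast; field_simp; ring
  clear_value y c
  have hterm : ∀ j ∈ Finset.range N,
      |(1 / N) * f (c j) - ∫ t in (c j)..(c (j + 1)), f t| ≤ L / N ^ 2 := by
    intro j _
    have hconst : (1 / (N:ℝ)) * f (c j) = ∫ _t in (c j)..(c (j + 1)), f (c j) := by
      rw [intervalIntegral.integral_const, hstep j, smul_eq_mul]
      ring_nf
    rw [hconst, ← intervalIntegral.integral_sub intervalIntegrable_const (hint _ _)]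
    have hNpos : (0:ℝ) < 1 / N := by positivity
    have hle : c j ≤ c (j + 1) := by
      rw [hstep j]; linarith
    have hbound : ∀ t ∈ Set.uIoc (c j) (c (j + 1)), ‖f (c j) - f t‖ ≤ L * (1 / N) := by
      intro t ht
      rw [Set.uIoc_of_le hle, hstep j, Set.mem_Ioc] at ht
      obtain ⟨ht1, ht2⟩ := ht
      have habs : |c j - t| ≤ 1 / (N:ℝ) := by
        rw [abs_sub_comm, abs_le]
        constructor
        · linarith
        · linarith
      exact le_trans (hlip (c j) t) (mul_le_mul_of_nonneg_left habs hL0)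
    have hnorm := intervalIntegral.norm_integral_le_of_norm_le_const hbound
    have habs : |c (j + 1) - c j| = 1 / N := by
      rw [hstep j, add_sub_cancel_left, abs_of_nonneg hNpos.le]
    rw [habs, Real.norm_eq_abs] at hnorm
    calc |∫ t in (c j)..(c (j + 1)), (f (c j) - f t)| ≤ L * (1 / N) * (1 / (N:ℝ)) := hnorm
      _ = L / N ^ 2 := by rw [pow_two]; field_simp
  calc |PFc N f x| ≤ ∑ j ∈ Finset.range N, |(1 / (N:ℝ)) * f (c j) -
        ∫ t in (c j)..(c (j + 1)), f t| := by
        rw [hkey]; exact Finset.abs_sum_le_sum_abs _ _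
    _ ≤ ∑ _j ∈ Finset.range N, L / N ^ 2 := Finset.sum_le_sum hterm
    _ = L / N := by
        rw [Finset.sum_const, Finset.card_range, nsmul_eq_mul, pow_two]
        field_simp

set_option maxHeartbeats 1000000 in
/-- If `a_i = b` for all `k − K ≤ i ≤ k + 2`, then `‖u_j − ∑_{i=0}^∞ (T̂*_b)^i f‖ ≤ C 2^{−K}`
for `j = k, k+1`, where the constant `C` depends only on `‖f‖`. -/
theorem uc_close_to_geometric_series
    (f : ℝ → ℝ) (hf_per : Periodic f 1) (hf_C1 : ContDiff ℝ 1 f)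
    (hf_mean : ∫ x in Set.Ioc (0 : ℝ) 1, f x = 0) :
    ∃ C : ℝ, ∀ a : ℕ → ℕ, (∀ i, 2 ≤ a i) →
      ∀ b : ℕ, 2 ≤ b → ∀ K k : ℕ, 1 ≤ K → K < k →
        (∀ i : ℕ, k - K ≤ i → i ≤ k + 2 → a i = b) →
        ∀ j : ℕ, j = k ∨ j = k + 1 →
          Cnorm (fun x => uc a f j x - PFgeom b f x) ≤ C / 2 ^ K := by
  classical
  have hf_cont : Continuous f := hf_C1.continuous
  have hf_diff : Differentiable ℝ f := hf_C1.differentiable one_ne_zero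
  have hderiv_cont : Continuous (deriv f) := hf_C1.continuous_deriv le_rfl
  obtain ⟨L0, hL0⟩ := (isCompact_Icc (a := (0:ℝ)) (b := 1)).exists_bound_of_continuousOn
    hderiv_cont.continuousOn
  set L : ℝ := max L0 0 with hLdef
  have hL0' : 0 ≤ L := le_max_right _ _
  have hper_deriv : Periodic (deriv f) 1 := by
    intro x
    have h1 : deriv (fun y => f (y + 1)) x = deriv f (x + 1) := deriv_comp_add_const f 1 x
    have h2 : (fun y => f (y + 1)) = f := funext fun y => hf_per y
    rw [h2] at h1
    exact h1.symm
  have hL : ∀ x, |deriv f x| ≤ L := by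
    intro x
    have hfr : deriv f x = deriv f (Int.fract x) := by
      have h0 : Int.fract x = x - (⌊x⌋ : ℤ) • (1:ℝ) := by
        rw [zsmul_eq_mul, mul_one]; rfl
      rw [h0, hper_deriv.sub_zsmul_eq]
    rw [hfr, ← Real.norm_eq_abs]
    exact le_trans (hL0 _ ⟨Int.fract_nonneg x, (Int.fract_lt_one x).le⟩) (le_max_left _ _)
  have hlip : ∀ u v : ℝ, |f u - f v| ≤ L * |u - v| := by
    intro u v
    have := Convex.norm_image_sub_le_of_norm_deriv_le (𝕜 := ℝ) (s := Set.univ)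
      (fun z _ => hf_diff z) (fun z _ => by rw [Real.norm_eq_abs]; exact hL z) convex_univ
      (Set.mem_univ v) (Set.mem_univ u)
    simpa [Real.norm_eq_abs] using this
  have hmean : ∫ t in (0:ℝ)..1, f t = 0 := by
    rw [intervalIntegral.integral_of_le (by norm_num : (0:ℝ) ≤ 1)]
    exact hf_mean
  have hgeo : ∀ (N s : ℕ), 2 ^ s ≤ N → L / (N:ℝ) ≤ L * (1/2:ℝ) ^ s := by
    intro N s h
    have h1 : (0:ℝ) < 2 ^ s := by positivity
    have h2 : ((2:ℝ)) ^ s ≤ (N:ℝ) := by exact_mod_cast h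
    calc L / (N:ℝ) ≤ L / 2 ^ s := by gcongr
      _ = L * (1/2:ℝ) ^ s := by rw [one_div, inv_pow, div_eq_mul_inv]
  have hPFb : ∀ {N : ℕ}, 1 ≤ N → ∀ x, |PFc N f x| ≤ L / N :=
    fun hN x => PFc_sup_bound f hf_per hf_cont hmean hL0' hlip hN x
  have hPDb : ∀ {N : ℕ}, 1 ≤ N → ∀ x, |PFd N f x| ≤ L / N :=
    fun hN x => PFd_bound f hL hN x
  have hDeriv : ∀ (N : ℕ) (x : ℝ), HasDerivAt (PFc N f) (PFd N f x) x :=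
    PFc_hasDerivAt_s8 f hf_C1
  refine ⟨4 * L, ?_⟩
  intro a ha b hb K k hK hKk hab j hj
  have hb1 : 1 ≤ b := by omega
  have ha1 : ∀ t, 1 ≤ a t := fun t => by have := ha t; omega
  have hjk : k ≤ j := by rcases hj with rfl | rfl <;> omega
  have hjk' : j ≤ k + 1 := by rcases hj with rfl | rfl <;> omega
  set n : ℕ := k - K - 1 with hn
  set M : ℕ := j + 1 - (k - K) with hM
  have hkK : 1 ≤ k - K := by omega
  have hM1 : K + 1 ≤ M := by omega
  set P : ℕ → ℕ := fun i => ∏ t ∈ Finset.Icc (i+1) j, a t with hP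
  have hPge : ∀ i, i ≤ j → 2 ^ (j - i) ≤ P i := by
    intro i hij
    have h := Finset.prod_le_prod' (s := Finset.Icc (i+1) j)
      (f := fun _ => 2) (g := a) (fun t _ => ha t)
    rwa [Finset.prod_const, Nat.card_Icc, show j + 1 - (i+1) = j - i from by omega] at h
  have hP1 : ∀ i, 1 ≤ P i := fun i => Finset.one_le_prod' fun t _ => ha1 t
  have hPb : ∀ i, n + 1 ≤ i → i ≤ j → P i = b ^ (j - i) := by
    intro i h1 h2
    simp only [hP]
    have hc : ∀ t ∈ Finset.Icc (i+1) j, a t = b := fun t ht => by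
      rw [Finset.mem_Icc] at ht; exact hab t (by omega) (by omega)
    rw [Finset.prod_congr rfl hc, Finset.prod_const, Nat.card_Icc]
    congr 1
    omega
  have hsum_geom : Summable (fun m : ℕ => L * (1/2:ℝ) ^ m) :=
    summable_geometric_two.mul_left L
  have hb_pow : ∀ m : ℕ, 2 ^ m ≤ b ^ m := fun m => Nat.pow_le_pow_left hb m
  have hterm_bound : ∀ (m : ℕ) (x : ℝ), |PFc (b ^ m) f x| ≤ L * (1/2:ℝ)^m := by
    intro m x
    calc |PFc (b^m) f x| ≤ L / ((b^m : ℕ):ℝ) := hPFb (Nat.one_le_pow _ _ (by omega)) x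
      _ ≤ L * (1/2:ℝ)^m := hgeo _ _ (hb_pow m)
  have hsum_tail : ∀ x, Summable (fun m : ℕ => PFc (b ^ m) f x) := by
    intro x
    exact Summable.of_norm_bounded hsum_geom
      (fun m => by rw [Real.norm_eq_abs]; exact hterm_bound m x)
  have h_uc : ∀ x, uc a f j x =
      (∑ i ∈ Finset.Icc 1 n, PFc (P i) f x) + ∑ m ∈ Finset.range M, PFc (b ^ m) f x := by
    intro x
    have e1 : uc a f j x = ∑ i ∈ Finset.Icc 1 j, PFc (P i) f x := by
      unfold uc
      exact Finset.sum_congr rfl fun i _ => by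
        rw [PFcSeg_eq a ha1 (by omega : 1 ≤ i + 1) f j]
    have e2 : ∑ i ∈ Finset.Icc 1 j, PFc (P i) f x
        = (∑ i ∈ Finset.Icc 1 n, PFc (P i) f x) + ∑ i ∈ Finset.Icc (n+1) j, PFc (P i) f x := by
      have h := Finset.sum_Ioc_consecutive (fun i => PFc (P i) f x)
        (Nat.zero_le n) (by omega : n ≤ j)
      rw [← Finset.Icc_add_one_left_eq_Ioc, ← Finset.Icc_add_one_left_eq_Ioc] at h
      exact h.symm
    have e3 : ∑ i ∈ Finset.Icc (n+1) j, PFc (P i) f x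
        = ∑ m ∈ Finset.range M, PFc (b^m) f x := by
      refine Finset.sum_nbij' (fun i => j - i) (fun m => j - m) ?_ ?_ ?_ ?_ ?_
      · intro i hi; simp only [Finset.mem_Icc] at hi; simp only [Finset.mem_range]; omega
      · intro m hm; simp only [Finset.mem_range] at hm; simp only [Finset.mem_Icc]; omega
      · intro i hi; simp only [Finset.mem_Icc] at hi; omega
      · intro m hm; simp only [Finset.mem_range] at hm; omega
      · intro i hi
        rw [Finset.mem_Icc] at hi
        exact congrArg (fun N => PFc N f x) (hPb i hi.1 hi.2)
    rw [e1, e2, e3]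
  have h_g : ∀ x, PFgeom b f x =
      (∑ m ∈ Finset.range M, PFc (b ^ m) f x) + ∑' m : ℕ, PFc (b ^ (m + M)) f x := by
    intro x
    have e1 : PFgeom b f x = ∑' i : ℕ, PFc (b ^ i) f x :=
      tsum_congr fun i => by rw [PFc_iterate b hb1 f i]
    rw [e1, ← Summable.sum_add_tsum_nat_add M (hsum_tail x)]
  set R : ℝ → ℝ := fun x =>
    (∑ i ∈ Finset.Icc 1 n, PFc (P i) f x) - ∑' m : ℕ, PFc (b ^ (m + M)) f x with hR
  set R' : ℝ → ℝ := fun x =>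
    (∑ i ∈ Finset.Icc 1 n, PFd (P i) f x) - ∑' m : ℕ, PFd (b ^ (m + M)) f x with hR'
  have hfun : (fun x => uc a f j x - PFgeom b f x) = R := by
    funext x
    simp only [hR]
    rw [h_uc x, h_g x]
    ring
  have hDtail : ∀ x, HasDerivAt (fun y => ∑' m : ℕ, PFc (b ^ (m + M)) f y)
      (∑' m : ℕ, PFd (b ^ (m + M)) f x) x := by
    intro x
    refine hasDerivAt_tsum (u := fun m : ℕ => L * (1/2:ℝ)^m) (y₀ := (0:ℝ)) hsum_geom
      (fun m y => hDeriv _ y) (fun m y => ?_) ?_ x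
    · rw [Real.norm_eq_abs]
      calc |PFd (b ^ (m + M)) f y| ≤ L / ((b ^ (m+M) : ℕ):ℝ) :=
            hPDb (Nat.one_le_pow _ _ (by omega)) y
        _ ≤ L * (1/2:ℝ)^(m+M) := hgeo _ _ (hb_pow (m+M))
        _ ≤ L * (1/2:ℝ)^m := by
            refine mul_le_mul_of_nonneg_left ?_ hL0'
            exact pow_le_pow_of_le_one (by norm_num) (by norm_num) (by omega)
    · refine Summable.of_norm_bounded hsum_geom (fun m => ?_)
      rw [Real.norm_eq_abs]
      refine le_trans (hterm_bound (m+M) 0) ?_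
      refine mul_le_mul_of_nonneg_left ?_ hL0'
      exact pow_le_pow_of_le_one (by norm_num) (by norm_num) (by omega)
  have hRd : ∀ x, HasDerivAt R (R' x) x := by
    intro x
    simp only [hR, hR']
    exact HasDerivAt.sub (HasDerivAt.fun_sum fun i _ => hDeriv (P i) x) (hDtail x)
  have habs_sub : ∀ u v : ℝ, |u - v| ≤ |u| + |v| := by
    intro u v
    calc |u - v| ≤ |u| + |-v| := by rw [sub_eq_add_neg]; exact abs_add_le _ _
      _ = |u| + |v| := by rw [abs_neg]
  have hfin_bound : ∀ (v : ℕ → ℝ), (∀ i ∈ Finset.Icc 1 n, |v i| ≤ L / ((P i : ℕ):ℝ)) →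
      |∑ i ∈ Finset.Icc 1 n, v i| ≤ L * (1/2:ℝ)^K := by
    intro v hv
    calc |∑ i ∈ Finset.Icc 1 n, v i| ≤ ∑ i ∈ Finset.Icc 1 n, |v i| :=
          Finset.abs_sum_le_sum_abs _ _
      _ ≤ ∑ i ∈ Finset.Icc 1 n, (L * (1/2:ℝ)^(K+1)) * (1/2:ℝ)^(n - i) := by
          refine Finset.sum_le_sum fun i hi => ?_
          have hi' := Finset.mem_Icc.mp hi
          calc |v i| ≤ L / ((P i : ℕ):ℝ) := hv i hi
            _ ≤ L * (1/2:ℝ)^(j - i) := hgeo _ _ (hPge i (by omega))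
            _ ≤ L * (1/2:ℝ)^((K+1) + (n-i)) := by
                refine mul_le_mul_of_nonneg_left ?_ hL0'
                exact pow_le_pow_of_le_one (by norm_num) (by norm_num) (by omega)
            _ = (L * (1/2:ℝ)^(K+1)) * (1/2:ℝ)^(n-i) := by rw [pow_add]; ring
      _ = (L * (1/2:ℝ)^(K+1)) * ∑ i ∈ Finset.Icc 1 n, (1/2:ℝ)^(n-i) := by
          rw [← Finset.mul_sum]
      _ ≤ (L * (1/2:ℝ)^(K+1)) * 2 := by
          refine mul_le_mul_of_nonneg_left ?_ (by positivity)
          have e : ∑ i ∈ Finset.Icc 1 n, (1/2:ℝ)^(n-i) = ∑ m ∈ Finset.range n, (1/2:ℝ)^m := by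
            refine Finset.sum_nbij' (fun i => n - i) (fun m => n - m) ?_ ?_ ?_ ?_ ?_
            · intro i hi; simp only [Finset.mem_Icc] at hi; simp only [Finset.mem_range]; omega
            · intro m hm; simp only [Finset.mem_range] at hm; simp only [Finset.mem_Icc]; omega
            · intro i hi; simp only [Finset.mem_Icc] at hi; omega
            · intro m hm; simp only [Finset.mem_range] at hm; omega
            · intro i _; rfl
          rw [e]
          exact sum_geometric_two_le n
      _ = L * (1/2:ℝ)^K := by rw [pow_succ]; ring
  have htail_bound : ∀ (v : ℕ → ℝ), (∀ m, |v m| ≤ L / ((b ^ (m+M) : ℕ):ℝ)) →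
      |∑' m, v m| ≤ L * (1/2:ℝ)^K := by
    intro v hv
    have hb2 : ∀ m, |v m| ≤ (L * (1/2:ℝ)^(K+1)) * (1/2:ℝ)^m := by
      intro m
      calc |v m| ≤ L / ((b^(m+M) : ℕ):ℝ) := hv m
        _ ≤ L * (1/2:ℝ)^(m+M) := hgeo _ _ (hb_pow (m+M))
        _ ≤ L * (1/2:ℝ)^(m+(K+1)) := by
            refine mul_le_mul_of_nonneg_left ?_ hL0'
            exact pow_le_pow_of_le_one (by norm_num) (by norm_num) (by omega)
        _ = (L * (1/2:ℝ)^(K+1)) * (1/2:ℝ)^m := by rw [pow_add]; ring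
    have hsg : Summable (fun m : ℕ => (L * (1/2:ℝ)^(K+1)) * (1/2:ℝ)^m) :=
      summable_geometric_two.mul_left _
    have hsv : Summable v := Summable.of_norm_bounded hsg
      (fun m => by rw [Real.norm_eq_abs]; exact hb2 m)
    have hsva : Summable (fun m => |v m|) := by
      simpa [Real.norm_eq_abs] using hsv.abs
    calc |∑' m, v m| ≤ ∑' m, |v m| := by
          rw [← Real.norm_eq_abs]
          refine le_trans (norm_tsum_le_tsum_norm ?_) ?_
          · simpa [Real.norm_eq_abs] using hsva
          · simp [Real.norm_eq_abs]
      _ ≤ ∑' m, (L * (1/2:ℝ)^(K+1)) * (1/2:ℝ)^m := Summable.tsum_le_tsum hb2 hsva hsg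
      _ = (L * (1/2:ℝ)^(K+1)) * 2 := by rw [tsum_mul_left, tsum_geometric_two]
      _ = L * (1/2:ℝ)^K := by rw [pow_succ]; ring
  have hRbound : ∀ x, |R x| ≤ 2 * (L * (1/2:ℝ)^K) := by
    intro x
    simp only [hR]
    refine le_trans (habs_sub _ _) ?_
    have h1 := hfin_bound (fun i => PFc (P i) f x) (fun i _ => hPFb (hP1 i) x)
    have h2 := htail_bound (fun m => PFc (b ^ (m+M)) f x)
      (fun m => hPFb (Nat.one_le_pow _ _ (by omega)) x)
    linarith
  have hR'bound : ∀ x, |R' x| ≤ 2 * (L * (1/2:ℝ)^K) := by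
    intro x
    simp only [hR']
    refine le_trans (habs_sub _ _) ?_
    have h1 := hfin_bound (fun i => PFd (P i) f x) (fun i _ => hPDb (hP1 i) x)
    have h2 := htail_bound (fun m => PFd (b ^ (m+M)) f x)
      (fun m => hPDb (Nat.one_le_pow _ _ (by omega)) x)
    linarith
  rw [hfun]
  have hCn : Cnorm R ≤ 4 * (L * (1/2:ℝ)^K) := by
    unfold Cnorm
    have h1 : (⨆ x : ℝ, |R x|) ≤ 2 * (L * (1/2:ℝ)^K) := ciSup_le hRbound
    have h2 : (⨆ x : ℝ, |deriv R x|) ≤ 2 * (L * (1/2:ℝ)^K) := by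
      refine ciSup_le fun x => ?_
      rw [(hRd x).deriv]
      exact hR'bound x
    linarith
  calc Cnorm R ≤ 4 * (L * (1/2:ℝ)^K) := hCn
    _ = 4 * L / 2^K := by
        rw [one_div, inv_pow, div_eq_mul_inv]
        ring
end

section
/- Let b ≥ 2 be an integer and f ∈ C¹(S¹) with ∫ f dx = 0. The series g := ∑_{i=0}^{∞} (T̂*_b)^i f converges in C¹-norm and satisfies g − T̂*_b g = f. Moreover, if g is (almost everywhere equal to a function) measurable with respect to T_b^{-1}(Borel), then u := T̂*_b g satisfies u ∘ T_b − u = f Lebesgue-almost everywhere; in particular f is then a T_b-coboundary with continuously differentiable transfer function u. -/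
/-!
Setting: the circle `S¹ = ℝ/ℤ` with Lebesgue (Haar) probability measure, realized as
`1`-periodic functions on `ℝ` together with Lebesgue measure restricted to `(0, 1]`.
For an integer `b ≥ 2`, the map `T_b x = bx (mod 1)` lifts to `x ↦ b * x` on `ℝ`, and its
Perron–Frobenius operator (the `L²`-adjoint of the Koopman operator `g ↦ g ∘ T_b`) is
`(T̂*_b g)(x) = (1/b) ∑_{j<b} g((x+j)/b)`.
-/

open MeasureTheory ProbabilityTheory Filter Function
open scoped ENNReal Topology

section Aux

lemma my_periodic_deriv {g : ℝ → ℝ} (h : Periodic g 1) : Periodic (deriv g) 1 := by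
  intro x
  have h1 : deriv (fun y => g (y + 1)) x = deriv g (x + 1) := deriv_comp_add_const g 1 x
  have h2 : (fun y => g (y + 1)) = g := funext fun y => h y
  rw [← h1, h2]

lemma my_periodic_fract {g : ℝ → ℝ} (h : Periodic g 1) (x : ℝ) : g (Int.fract x) = g x := by
  have h1 := h.sub_int_mul_eq (x := x) ⌊x⌋
  rw [mul_one, Int.self_sub_floor] at h1
  exact h1

lemma pfc_periodic {b : ℕ} (hb : 1 ≤ b) {g : ℝ → ℝ} (hg : Periodic g 1) :
    Periodic (PFc b g) 1 := by
  intro x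
  have hb0 : (b : ℝ) ≠ 0 := Nat.cast_ne_zero.mpr (by omega)
  unfold PFc
  congr 1
  have e1 : ∀ j : ℕ, g ((x + 1 + j) / b) = g ((x + (j + 1 : ℕ)) / b) := by
    intro j; push_cast; ring_nf
  calc ∑ j ∈ Finset.range b, g ((x + 1 + j) / b)
      = ∑ j ∈ Finset.range b, g ((x + (j + 1 : ℕ)) / b) :=
        Finset.sum_congr rfl fun j _ => e1 j
    _ = ∑ j ∈ Finset.range (b + 1), g ((x + j) / b) - g ((x + (0 : ℕ)) / b) := by
        rw [Finset.sum_range_succ' (fun j : ℕ => g ((x + j) / b)) b]; ring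
    _ = ∑ j ∈ Finset.range b, g ((x + j) / b) + g ((x + (b : ℕ)) / b) - g ((x + (0 : ℕ)) / b) := by
        rw [Finset.sum_range_succ]
    _ = ∑ j ∈ Finset.range b, g ((x + j) / b) := by
        have : (x + (b : ℕ)) / b = (x + (0 : ℕ)) / b + 1 := by
          push_cast; field_simp; ring
        rw [this, hg ((x + (0 : ℕ)) / b)]; ring

lemma pfc_contDiff {b : ℕ} {g : ℝ → ℝ} (hg : ContDiff ℝ 1 g) : ContDiff ℝ 1 (PFc b g) := by
  unfold PFc
  exact contDiff_const.mul (ContDiff.sum fun j _ =>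
    hg.comp ((contDiff_id.add contDiff_const).div_const _))

lemma pfc_hasDerivAt {b : ℕ} {g : ℝ → ℝ} (hg : Differentiable ℝ g) (x : ℝ) :
    HasDerivAt (PFc b g)
      ((1 / (b : ℝ)) * ∑ j ∈ Finset.range b, deriv g ((x + j) / b) * (1 / (b : ℝ))) x := by
  have h : ∀ j ∈ Finset.range b,
      HasDerivAt (fun x : ℝ => g ((x + j) / b)) (deriv g ((x + j) / b) * (1 / (b : ℝ))) x := by
    intro j _
    have h1 : HasDerivAt (fun x : ℝ => (x + (j : ℝ)) / b) (1 / (b : ℝ)) x := by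
      simpa using ((hasDerivAt_id x).add_const (j : ℝ)).div_const (b : ℝ)
    exact ((hg _).hasDerivAt.comp x h1)
  exact (HasDerivAt.fun_sum h).const_mul _

lemma pfc_deriv_bound {b : ℕ} (hb : 2 ≤ b) {g : ℝ → ℝ} {K : ℝ}
    (hg : Differentiable ℝ g) (hK : ∀ x, |deriv g x| ≤ K) :
    ∀ x, |deriv (PFc b g) x| ≤ K / 2 := by
  intro x
  have hK0 : 0 ≤ K := le_trans (abs_nonneg _) (hK 0)
  have hbR : (2 : ℝ) ≤ (b : ℝ) := by exact_mod_cast hb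
  have hb0 : (0 : ℝ) < (b : ℝ) := by linarith
  rw [(pfc_hasDerivAt hg x).deriv]
  have h1 : |∑ j ∈ Finset.range b, deriv g ((x + j) / b) * (1 / (b : ℝ))|
      ≤ ∑ j ∈ Finset.range b, K * (1 / (b : ℝ)) := by
    refine (Finset.abs_sum_le_sum_abs _ _).trans (Finset.sum_le_sum fun j _ => ?_)
    rw [abs_mul]
    refine mul_le_mul (hK _) (le_of_eq (abs_of_pos (by positivity))) (abs_nonneg _) hK0
  rw [abs_mul]
  calc |1 / (b : ℝ)| * |∑ j ∈ Finset.range b, deriv g ((x + j) / b) * (1 / (b : ℝ))|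
      ≤ |1 / (b : ℝ)| * ∑ j ∈ Finset.range b, K * (1 / (b : ℝ)) :=
        mul_le_mul_of_nonneg_left h1 (abs_nonneg _)
    _ = K / b := by
        rw [Finset.sum_const, Finset.card_range, abs_of_pos (by positivity)]
        rw [nsmul_eq_mul]
        field_simp
    _ ≤ K / 2 := by
        apply div_le_div_of_nonneg_left hK0 (by norm_num) hbR |>.trans_eq rfl

lemma pfc_mean {b : ℕ} (hb : 1 ≤ b) {g : ℝ → ℝ} (hg : Continuous g) :
    ∫ x in (0:ℝ)..1, PFc b g x = ∫ x in (0:ℝ)..1, g x := by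
  have hb0 : (b : ℝ) ≠ 0 := Nat.cast_ne_zero.mpr (by omega)
  unfold PFc
  have hint : ∀ j ∈ Finset.range b, IntervalIntegrable (fun x : ℝ => g ((x + (j:ℝ))/(b:ℝ))) volume 0 1 :=
    fun j _ => Continuous.intervalIntegrable (by fun_prop) 0 1
  rw [intervalIntegral.integral_const_mul, intervalIntegral.integral_finset_sum hint]
  have each : ∀ j : ℕ, (∫ x in (0:ℝ)..1, g ((x + j) / b))
      = (b : ℝ) * ∫ x in ((j : ℝ)/b)..(((j : ℝ) + 1)/b), g x := by
    intro j
    have h1 : (∫ x in (0:ℝ)..1, g ((x + j) / b))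
        = ∫ x in ((0:ℝ) + j)..(1 + (j:ℝ)), g (x / b) :=
      intervalIntegral.integral_comp_add_right (fun y => g (y / b)) (j : ℝ)
    rw [h1, intervalIntegral.integral_comp_div _ hb0, smul_eq_mul]
    norm_num [add_comm]
  rw [Finset.sum_congr rfl fun j _ => each j]
  have key : ∑ j ∈ Finset.range b, ∫ x in ((j:ℝ)/b)..(((j:ℝ)+1)/b), g x
      = ∫ x in (0:ℝ)..1, g x := by
    have := intervalIntegral.sum_integral_adjacent_intervals
      (a := fun j : ℕ => (j : ℝ)/b) (n := b) (f := g) (μ := volume)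
      (fun k _ => hg.intervalIntegrable _ _)
    simp only [Nat.cast_zero, zero_div] at this
    rw [div_self hb0] at this
    rw [← this]
    exact Finset.sum_congr rfl fun j _ => by push_cast; ring_nf
  rw [← Finset.mul_sum, key]
  field_simp

lemma sup_bound {g : ℝ → ℝ} {K : ℝ} (hper : Periodic g 1) (hd : Differentiable ℝ g)
    (hc : Continuous g) (hK : ∀ x, |deriv g x| ≤ K)
    (hmean : ∫ x in (0:ℝ)..1, g x = 0) : ∀ x, |g x| ≤ K := by
  have key : ∀ y ∈ Set.Icc (0:ℝ) 1, |g y| ≤ K := by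
    intro y hy
    have hrepr : g y = ∫ t in (0:ℝ)..1, (g y - g t) := by
      rw [intervalIntegral.integral_sub (intervalIntegrable_const)
        (hc.intervalIntegrable _ _), hmean]
      simp
    rw [hrepr]
    have hbd : ∀ t ∈ Set.uIoc (0:ℝ) 1, ‖g y - g t‖ ≤ K := by
      intro t ht
      rw [Set.uIoc_of_le (by norm_num : (0:ℝ) ≤ 1)] at ht
      have h1 : ‖g y - g t‖ ≤ K * ‖y - t‖ :=
        Convex.norm_image_sub_le_of_norm_deriv_le (fun x _ => hd x)
          (fun x _ => by simpa using hK x) convex_univ (Set.mem_univ t) (Set.mem_univ y)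
      have h2 : ‖y - t‖ ≤ 1 := by
        rw [Real.norm_eq_abs, abs_sub_le_iff]
        constructor <;> [skip; skip] <;>
          · have := hy.1; have := hy.2; have := ht.1; have := ht.2; linarith
      calc ‖g y - g t‖ ≤ K * ‖y - t‖ := h1
        _ ≤ K * 1 := by
            have hK0 : 0 ≤ K := le_trans (abs_nonneg _) (hK 0)
            exact mul_le_mul_of_nonneg_left h2 hK0
        _ = K := mul_one K
    have := intervalIntegral.norm_integral_le_of_norm_le_const hbd
    simpa using this
  intro x
  rw [← my_periodic_fract hper x]
  exact key _ ⟨Int.fract_nonneg x, (Int.fract_lt_one x).le⟩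

end Aux

set_option maxHeartbeats 1000000 in
/-- The series `g = ∑_{i=0}^∞ (T̂*_b)^i f` converges in `C¹`-norm and satisfies
`g − T̂*_b g = f`.  Moreover, if `g` is (a.e. equal to a function) measurable with respect to
`T_b^{-1}(Borel)`, then `u := T̂*_b g` is `C¹` and satisfies `u ∘ T_b − u = f` a.e.; in
particular `f` is then a `T_b`-coboundary with continuously differentiable transfer function. -/
theorem geometric_series_and_coboundary
    (b : ℕ) (hb : 2 ≤ b)
    (f : ℝ → ℝ) (hf_per : Periodic f 1) (hf_C1 : ContDiff ℝ 1 f)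
    (hf_mean : ∫ x in Set.Ioc (0 : ℝ) 1, f x = 0) :
    Tendsto (fun m => Cnorm (fun x =>
        PFgeom b f x - ∑ i ∈ Finset.range m, (PFc b)^[i] f x)) atTop (𝓝 0) ∧
    (∀ x, PFgeom b f x - PFc b (PFgeom b f) x = f x) ∧
    ((∃ h : ℝ → ℝ, Measurable[circleSigma b] h ∧ PFgeom b f =ᵐ[circleMeasure] h) →
      ContDiff ℝ 1 (PFc b (PFgeom b f)) ∧ Periodic (PFc b (PFgeom b f)) 1 ∧
      ∀ᵐ x ∂circleMeasure,
        PFc b (PFgeom b f) ((b : ℝ) * x) - PFc b (PFgeom b f) x = f x) := by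
  have hb1 : 1 ≤ b := by omega
  have hb0 : (b : ℝ) ≠ 0 := Nat.cast_ne_zero.mpr (by omega)
  set F : ℕ → ℝ → ℝ := fun i => (PFc b)^[i] f with hF
  -- bound on deriv f
  obtain ⟨C, hC⟩ : ∃ C, ∀ y ∈ Set.Icc (0:ℝ) 1, ‖deriv f y‖ ≤ C :=
    (isCompact_Icc).exists_bound_of_continuousOn
      ((contDiff_one_iff_deriv.mp hf_C1).2.continuousOn)
  set M : ℝ := max C 0 with hMdef
  have hM0 : 0 ≤ M := le_max_right _ _
  have hM : ∀ x, |deriv f x| ≤ M := by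
    intro x
    rw [← my_periodic_fract (my_periodic_deriv hf_per) x]
    exact le_trans (hC _ ⟨Int.fract_nonneg x, (Int.fract_lt_one x).le⟩) (le_max_left _ _)
  have hmean' : ∫ x in (0:ℝ)..1, f x = 0 := by
    rw [intervalIntegral.integral_of_le (by norm_num : (0:ℝ) ≤ 1)]
    exact hf_mean
  -- main induction
  have main : ∀ i, Periodic (F i) 1 ∧ ContDiff ℝ 1 (F i) ∧
      (∫ x in (0:ℝ)..1, F i x) = 0 ∧ ∀ x, |deriv (F i) x| ≤ M / 2 ^ i := by
    intro i; induction i with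
    | zero => exact ⟨hf_per, hf_C1, hmean', by intro x; simp only [pow_zero, div_one]; exact hM x⟩
    | succ n ih =>
      have hstep : F (n + 1) = PFc b (F n) := Function.iterate_succ_apply' _ _ _
      obtain ⟨hper, hC1, hmeanF, hder⟩ := ih
      rw [hstep]
      refine ⟨pfc_periodic hb1 hper, pfc_contDiff hC1, ?_, ?_⟩
      · rw [pfc_mean hb1 hC1.continuous, hmeanF]
      · have := pfc_deriv_bound hb (hC1.differentiable (by norm_num)) hder
        intro x
        calc |deriv (PFc b (F n)) x| ≤ (M / 2 ^ n) / 2 := this x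
          _ = M / 2 ^ (n + 1) := by ring
  have hFdiff : ∀ i, Differentiable ℝ (F i) := fun i =>
    (main i).2.1.differentiable (by norm_num)
  have hsupF : ∀ i x, |F i x| ≤ M / 2 ^ i := fun i =>
    sup_bound (main i).1 (hFdiff i) (main i).2.1.continuous (main i).2.2.2 (main i).2.2.1
  have hu : Summable (fun i : ℕ => M / 2 ^ i) := by
    have := (summable_geometric_of_lt_one (by norm_num : (0:ℝ) ≤ 1/2)
      (by norm_num)).mul_left M
    simpa [div_eq_mul_inv, ← inv_pow, one_div] using this
  have hsummableAt : ∀ x, Summable (fun i => F i x) := fun x =>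
    Summable.of_norm_bounded hu (fun i => by simpa using hsupF i x)
  have hsummableD : ∀ x, Summable (fun i => deriv (F i) x) := fun x =>
    Summable.of_norm_bounded hu (fun i => by simpa using (main i).2.2.2 x)
  have hgdef : PFgeom b f = fun x => ∑' i, F i x := rfl
  have hDeriv : ∀ x, HasDerivAt (PFgeom b f) (∑' i, deriv (F i) x) x := by
    intro x
    rw [hgdef]
    exact hasDerivAt_tsum hu (fun n y => (hFdiff n y).hasDerivAt)
      (fun n y => by simpa using (main n).2.2.2 y) (hsummableAt 0) x
  -- tail computations
  have hshift : ∀ m : ℕ, Summable (fun i : ℕ => M / 2 ^ (i + m)) := fun m =>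
    (summable_nat_add_iff m).mpr hu
  have htsum_shift : ∀ m : ℕ, (∑' i : ℕ, M / 2 ^ (i + m)) = 2 * (M / 2 ^ m) := by
    intro m
    have : (fun i : ℕ => M / 2 ^ (i + m)) = fun i : ℕ => (M / 2 ^ m) * (1 / 2) ^ i := by
      funext i; rw [pow_add, one_div, inv_pow]; field_simp
    rw [this, tsum_mul_left, tsum_geometric_two]; ring
  have tail_eq : ∀ m, (fun x => PFgeom b f x - ∑ i ∈ Finset.range m, F i x)
      = fun x => ∑' i, F (i + m) x := by
    intro m; funext x
    have h1 := Summable.sum_add_tsum_nat_add (f := fun i => F i x) m (hsummableAt x)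
    have h2 : PFgeom b f x = ∑' i, F i x := rfl
    simp only [h2]
    linarith
  have tail_sup : ∀ m x, |∑' i, F (i + m) x| ≤ 2 * (M / 2 ^ m) := by
    intro m x
    have h1 : ‖∑' i, F (i + m) x‖ ≤ ∑' i : ℕ, ‖F (i + m) x‖ :=
      norm_tsum_le_tsum_norm (Summable.of_nonneg_of_le (fun i => norm_nonneg _)
        (fun i => by simpa using hsupF (i + m) x) (hshift m))
    have h2 : (∑' i : ℕ, ‖F (i + m) x‖) ≤ ∑' i : ℕ, M / 2 ^ (i + m) :=
      Summable.tsum_le_tsum (fun i => by simpa using hsupF (i + m) x)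
        (Summable.of_nonneg_of_le (fun i => norm_nonneg _)
          (fun i => by simpa using hsupF (i + m) x) (hshift m)) (hshift m)
    calc |∑' i, F (i + m) x| ≤ ∑' i : ℕ, ‖F (i + m) x‖ := h1
      _ ≤ ∑' i : ℕ, M / 2 ^ (i + m) := h2
      _ = 2 * (M / 2 ^ m) := htsum_shift m
  have tail_hasDeriv : ∀ m x, HasDerivAt (fun x => ∑' i, F (i + m) x)
      (∑' i, deriv (F (i + m)) x) x := by
    intro m x
    exact hasDerivAt_tsum (hshift m) (fun n y => (hFdiff (n + m) y).hasDerivAt)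
      (fun n y => by simpa using (main (n + m)).2.2.2 y)
      ((summable_nat_add_iff m).mpr (hsummableAt 0)) x
  have tail_dsup : ∀ m x, |deriv (fun x => ∑' i, F (i + m) x) x| ≤ 2 * (M / 2 ^ m) := by
    intro m x
    rw [(tail_hasDeriv m x).deriv]
    have hsd : Summable fun i : ℕ => ‖deriv (F (i + m)) x‖ :=
      Summable.of_nonneg_of_le (fun i => norm_nonneg _)
        (fun i => by simpa using (main (i + m)).2.2.2 x) (hshift m)
    calc |∑' i, deriv (F (i + m)) x| ≤ ∑' i : ℕ, ‖deriv (F (i + m)) x‖ :=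
        norm_tsum_le_tsum_norm hsd
      _ ≤ ∑' i : ℕ, M / 2 ^ (i + m) :=
        Summable.tsum_le_tsum (fun i => by simpa using (main (i + m)).2.2.2 x) hsd (hshift m)
      _ = 2 * (M / 2 ^ m) := htsum_shift m
  -- Part 1
  have part1 : Tendsto (fun m => Cnorm (fun x =>
      PFgeom b f x - ∑ i ∈ Finset.range m, F i x)) atTop (𝓝 0) := by
    have hbd : ∀ m, Cnorm (fun x => PFgeom b f x - ∑ i ∈ Finset.range m, F i x)
        ≤ 4 * M * (1 / 2) ^ m := by
      intro m
      rw [tail_eq m]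
      unfold Cnorm
      have e1 : (⨆ x : ℝ, |(fun x => ∑' i, F (i + m) x) x|) ≤ 2 * (M / 2 ^ m) :=
        ciSup_le fun x => tail_sup m x
      have e2 : (⨆ x : ℝ, |deriv (fun x => ∑' i, F (i + m) x) x|) ≤ 2 * (M / 2 ^ m) :=
        ciSup_le fun x => tail_dsup m x
      have : (2 * (M / 2 ^ m)) + (2 * (M / 2 ^ m)) = 4 * M * (1 / 2) ^ m := by
        rw [one_div, inv_pow]; field_simp; ring
      linarith
    have hnn : ∀ m, 0 ≤ Cnorm (fun x => PFgeom b f x - ∑ i ∈ Finset.range m, F i x) := by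
      intro m
      exact add_nonneg (Real.iSup_nonneg fun x => abs_nonneg _)
        (Real.iSup_nonneg fun x => abs_nonneg _)
    have hlim : Tendsto (fun m : ℕ => 4 * M * (1 / 2 : ℝ) ^ m) atTop (𝓝 0) := by
      have := (tendsto_pow_atTop_nhds_zero_of_lt_one (by norm_num : (0:ℝ) ≤ 1/2)
        (by norm_num : (1/2:ℝ) < 1)).const_mul (4 * M)
      simpa using this
    exact squeeze_zero hnn hbd hlim
  -- Part 2
  have part2 : ∀ x, PFgeom b f x - PFc b (PFgeom b f) x = f x := by
    intro x
    have h1 : PFc b (PFgeom b f) x = ∑' i, F (i + 1) x := by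
      show (1 / (b:ℝ)) * ∑ j ∈ Finset.range b, (∑' i, F i ((x + j) / b)) = _
      rw [← Summable.tsum_finsetSum (fun j _ => hsummableAt _), ← tsum_mul_left]
      exact tsum_congr fun i => by
        rw [show F (i + 1) = PFc b (F i) from Function.iterate_succ_apply' _ _ _]
        rfl
    have h2 : PFgeom b f x = F 0 x + ∑' i, F (i + 1) x := Summable.tsum_eq_zero_add (hsummableAt x)
    have h3 : F 0 x = f x := rfl
    rw [h1, h2, h3]; ring
  refine ⟨part1, part2, ?_⟩
  -- Part 3
  rintro ⟨h, hmeas, hae⟩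
  have g_per : Periodic (PFgeom b f) 1 := fun x => tsum_congr fun i => (main i).1 x
  have g_C1 : ContDiff ℝ 1 (PFgeom b f) := by
    rw [contDiff_one_iff_deriv]
    refine ⟨fun x => (hDeriv x).differentiableAt, ?_⟩
    have hde : deriv (PFgeom b f) = fun x => ∑' i, deriv (F i) x :=
      funext fun x => (hDeriv x).deriv
    rw [hde]
    exact continuous_tsum (fun i => (contDiff_one_iff_deriv.mp (main i).2.1).2) hu
      (fun n x => by simpa using (main n).2.2.2 x)
  refine ⟨pfc_contDiff g_C1, pfc_periodic hb1 g_per, ?_⟩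
  -- fiber constancy of h
  have hfiber : ∀ x y : ℝ, Int.fract ((b:ℝ) * x) = Int.fract ((b:ℝ) * y) → h x = h y := by
    intro x y hxy
    have hm : MeasurableSet[circleSigma b] (h ⁻¹' {h x}) :=
      hmeas (measurableSet_singleton _)
    obtain ⟨s', _, hpre⟩ := hm
    have hx : Int.fract ((b:ℝ) * x) ∈ s' := by
      have : x ∈ h ⁻¹' {h x} := rfl
      rw [← hpre] at this; exact this
    have hy : y ∈ (fun z => Int.fract ((b:ℝ) * z)) ⁻¹' s' := by
      simp only [Set.mem_preimage, ← hxy]; exact hx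
    rw [hpre] at hy
    exact (hy : h y = h x).symm
  -- the full-measure set S
  set S : Set ℝ := {y | PFgeom b f y = h (Int.fract y)} with hS
  have hS01 : volume (Sᶜ ∩ Set.Ico (0:ℝ) 1) = 0 := by
    have hN : volume ({x | ¬ PFgeom b f x = h x} ∩ Set.Ioc (0:ℝ) 1) = 0 := by
      have := hae
      rw [EventuallyEq, ae_iff] at this
      rwa [circleMeasure, Measure.restrict_apply' measurableSet_Ioc] at this
    have hsub : Sᶜ ∩ Set.Ico (0:ℝ) 1 ⊆
        ({x | ¬ PFgeom b f x = h x} ∩ Set.Ioc (0:ℝ) 1) ∪ {0} := by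
      rintro y ⟨hyS, hy0, hy1⟩
      rcases eq_or_ne y 0 with rfl | hne
      · exact Or.inr rfl
      · left
        have hfr : Int.fract y = y := Int.fract_eq_self.mpr ⟨hy0, hy1⟩
        refine ⟨?_, lt_of_le_of_ne hy0 (Ne.symm hne), hy1.le⟩
        intro hcontra
        exact hyS (by rw [hS]; simp only [Set.mem_setOf_eq, hfr]; exact hcontra)
    exact measure_mono_null hsub (by
      rw [measure_union_null_iff]
      exact ⟨hN, measure_singleton 0⟩)
  have hSnull : volume Sᶜ = 0 := by
    have hcover : Sᶜ ⊆ ⋃ n : ℤ, (Sᶜ ∩ Set.Ico ((n:ℝ)) ((n:ℝ) + 1)) := by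
      intro y hy
      exact Set.mem_iUnion.mpr ⟨⌊y⌋, hy, Int.floor_le y, Int.lt_floor_add_one y⟩
    refine measure_mono_null hcover (measure_iUnion_null fun n => ?_)
    have hsub : Sᶜ ∩ Set.Ico ((n:ℝ)) ((n:ℝ) + 1) ⊆
        (fun y => y + (-(n:ℝ))) ⁻¹' (Sᶜ ∩ Set.Ico (0:ℝ) 1) := by
      rintro y ⟨hyS, hy0, hy1⟩
      have hmemS : (y + -(n:ℝ)) ∈ Sᶜ := by
        intro hmem
        apply hyS
        have e1 : PFgeom b f (y + -(n:ℝ)) = PFgeom b f y := by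
          simpa [sub_eq_add_neg] using g_per.sub_int_mul_eq (x := y) n
        have e2 : Int.fract (y + -(n:ℝ)) = Int.fract y := by
          simpa [sub_eq_add_neg] using Int.fract_sub_intCast y n
        show PFgeom b f y = h (Int.fract y)
        rw [← e1, ← e2]
        exact hmem
      exact ⟨hmemS, by simp only [Set.mem_Ico]; constructor <;> linarith⟩
    refine measure_mono_null hsub ?_
    rw [measure_preimage_add_right]
    exact hS01
  have hSmem : ∀ᵐ y ∂(volume : Measure ℝ), y ∈ S := by
    rw [ae_iff]
    exact hSnull
  have htrans : ∀ c : ℝ, ∀ᵐ x ∂(volume : Measure ℝ), (x + c) ∈ S := by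
    intro c
    rw [ae_iff]
    have he : {x : ℝ | ¬ (x + c) ∈ S} = (fun x => x + c) ⁻¹' Sᶜ := rfl
    rw [he, measure_preimage_add_right]
    exact hSnull
  have aeall : ∀ᵐ x ∂(volume : Measure ℝ), ∀ j ∈ Finset.range b, (x + (j:ℝ)/(b:ℝ)) ∈ S :=
    (Filter.eventually_all_finset _).mpr fun j _ => htrans _
  have hbf : ∀ y : ℝ, Int.fract ((b:ℝ) * Int.fract y) = Int.fract ((b:ℝ) * y) := by
    intro y
    have he : (b:ℝ) * Int.fract y = (b:ℝ) * y - ((b * ⌊y⌋ : ℤ) : ℝ) := by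
      rw [← Int.self_sub_floor]; push_cast; ring
    rw [he, Int.fract_sub_intCast]
  have final : ∀ᵐ x ∂(volume : Measure ℝ),
      PFc b (PFgeom b f) ((b:ℝ) * x) - PFc b (PFgeom b f) x = f x := by
    filter_upwards [hSmem, aeall] with x hxS hxall
    have hxS' : PFgeom b f x = h (Int.fract x) := hxS
    have hux : PFc b (PFgeom b f) x = PFgeom b f x - f x := by
      have := part2 x; linarith
    have hgb : PFc b (PFgeom b f) ((b:ℝ) * x) = PFgeom b f x := by
      show (1/(b:ℝ)) * ∑ j ∈ Finset.range b, PFgeom b f (((b:ℝ)*x + j)/b) = _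
      have hterm : ∀ j ∈ Finset.range b,
          PFgeom b f (((b:ℝ)*x + (j:ℝ))/(b:ℝ)) = PFgeom b f x := by
        intro j hj
        have e1 : ((b:ℝ)*x + (j:ℝ))/(b:ℝ) = x + (j:ℝ)/(b:ℝ) := by field_simp
        rw [e1]
        have h2 : PFgeom b f (x + (j:ℝ)/(b:ℝ)) = h (Int.fract (x + (j:ℝ)/(b:ℝ))) :=
          hxall j hj
        have h3 : Int.fract ((b:ℝ) * Int.fract (x + (j:ℝ)/(b:ℝ)))
            = Int.fract ((b:ℝ) * Int.fract x) := by
          rw [hbf, hbf]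
          have he2 : (b:ℝ) * (x + (j:ℝ)/(b:ℝ)) = (b:ℝ)*x + (j:ℕ) := by
            push_cast; field_simp
          rw [he2, Int.fract_add_natCast]
        have h4 : h (Int.fract (x + (j:ℝ)/(b:ℝ))) = h (Int.fract x) := hfiber _ _ h3
        rw [h2, h4]
        exact hxS'.symm
      rw [Finset.sum_congr rfl hterm, Finset.sum_const, Finset.card_range, nsmul_eq_mul]
      field_simp
    rw [hgb, hux]
    ring
  exact ae_restrict_of_ae final
end

section
/- Let f ∈ C¹(S¹) with ∫ f dx = 0 and let a_1, a_2, … be any sequence of integers ≥ 2. Then for all i, j ≥ 1, |E_μ[(f ∘ T_{[i]}) · (f ∘ T_{[j]})]| ≤ 2^{−|i−j|+1} ‖f‖², where ‖f‖ := sup|f| + sup|f'|. -/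
/-!
Setting: the circle `S¹ = ℝ/ℤ` with Lebesgue (Haar) probability measure, realized as
`1`-periodic functions on `ℝ` together with Lebesgue measure restricted to `(0, 1]`.
For an integer `b ≥ 2`, the map `T_b x = bx (mod 1)` lifts to `x ↦ b * x` on `ℝ`, and its
Perron–Frobenius operator (the `L²`-adjoint of the Koopman operator `g ↦ g ∘ T_b`) is
`(T̂*_b g)(x) = (1/b) ∑_{j<b} g((x+j)/b)`.
-/

open MeasureTheory ProbabilityTheory Filter Function
open scoped ENNReal Topology

lemma bdd_abs' (f : ℝ → ℝ) (hper : Periodic f 1) (hc : Continuous f) :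
    BddAbove (Set.range fun x => |f x|) := by
  obtain ⟨C, hC⟩ := (isCompact_Icc (a := (0:ℝ)) (b := 1)).bddAbove_image (hc.abs.continuousOn)
  refine ⟨C, ?_⟩
  rintro _ ⟨x, rfl⟩
  obtain ⟨y, hy, hxy⟩ := hper.exists_mem_Ico₀ one_pos x
  have : |f y| ∈ (fun x => |f x|) '' Set.Icc 0 1 := ⟨y, ⟨hy.1, hy.2.le⟩, rfl⟩
  simpa [hxy] using hC this

lemma key_bound (f : ℝ → ℝ) (hper : Periodic f 1) (hC1 : ContDiff ℝ 1 f)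
    (hmean : ∫ x in Set.Ioc (0:ℝ) 1, f x = 0) (Q : ℕ) (hQ : 1 ≤ Q) :
    |∫ x in (0:ℝ)..1, f x * f ((Q : ℝ) * x)| ≤
      (⨆ x, |f x|) * (⨆ x, |deriv f x|) / Q := by
  have hc : Continuous f := hC1.continuous
  have hc' : Continuous (deriv f) := hC1.continuous_deriv le_rfl
  have hperd : Periodic (deriv f) 1 := by
    intro x
    have h : (fun y => f (y + 1)) = f := funext fun y => hper y
    calc deriv f (x + 1) = deriv (fun y => f (y + 1)) x := (deriv_comp_add_const f 1 x).symm
    _ = deriv f x := by rw [h]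
  set M := ⨆ x, |f x| with hMdef
  set M' := ⨆ x, |deriv f x| with hM'def
  have hM : ∀ x, |f x| ≤ M := fun x => le_ciSup (bdd_abs' f hper hc) x
  have hM' : ∀ x, |deriv f x| ≤ M' := fun x => le_ciSup (bdd_abs' (deriv f) hperd hc') x
  have hM0 : 0 ≤ M := (abs_nonneg _).trans (hM 0)
  have hM'0 : 0 ≤ M' := (abs_nonneg _).trans (hM' 0)
  have hQ0 : (Q : ℝ) ≠ 0 := by positivity
  have hQpos : (0 : ℝ) < Q := by positivity
  have hmean0 : ∫ x in (0:ℝ)..1, f x = 0 := by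
    rw [intervalIntegral.integral_of_le zero_le_one]; exact hmean
  have hlip : ∀ x y : ℝ, |f y - f x| ≤ M' * |y - x| := by
    intro x y
    have := convex_univ.norm_image_sub_le_of_norm_deriv_le (f := f) (C := M')
      (fun z _ => (hC1.differentiable one_ne_zero).differentiableAt)
      (fun z _ => by rw [Real.norm_eq_abs]; exact hM' z) (Set.mem_univ x) (Set.mem_univ y)
    simpa [Real.norm_eq_abs] using this
  set F := fun x : ℝ => f x * f ((Q : ℝ) * x) with hFdef
  have hFc : Continuous F := hc.mul (hc.comp (continuous_const.mul continuous_id))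
  set c : ℕ → ℝ := fun k => (k : ℝ) / Q with hcdef
  have hcs : ∀ k : ℕ, c k ≤ c (k + 1) := by
    intro k
    simp only [hcdef]
    gcongr
    · push_cast; linarith
  have hz : ∀ k : ℕ, ∫ x in c k..c (k+1), f ((Q:ℝ) * x) = 0 := by
    intro k
    rw [intervalIntegral.integral_comp_mul_left f hQ0]
    have e1 : (Q:ℝ) * c k = (k : ℝ) := by simp only [hcdef]; field_simp
    have e2 : (Q:ℝ) * c (k+1) = (k : ℝ) + 1 := by
      simp only [hcdef]; push_cast; field_simp
    rw [e1, e2, hper.intervalIntegral_add_eq (k : ℝ) 0, zero_add, hmean0, smul_zero]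
  have hsub : ∀ k : ℕ, ∫ x in c k..c (k+1), F x
      = ∫ x in c k..c (k+1), (f x - f (c k)) * f ((Q:ℝ) * x) := by
    intro k
    have h1 : IntervalIntegrable F volume (c k) (c (k+1)) := hFc.intervalIntegrable _ _
    have h2 : IntervalIntegrable (fun x => f (c k) * f ((Q:ℝ)*x)) volume (c k) (c (k+1)) :=
      ((continuous_const.mul (hc.comp (continuous_const.mul continuous_id))).intervalIntegrable _ _)
    have he : ∀ x : ℝ, (f x - f (c k)) * f ((Q:ℝ)*x) = F x - f (c k) * f ((Q:ℝ)*x) := by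
      intro x; simp only [hFdef]; ring
    simp_rw [he]
    rw [intervalIntegral.integral_sub h1 h2, intervalIntegral.integral_const_mul, hz k,
      mul_zero, sub_zero]
  have hlen : c (1 + 1 - 1 + 1) = c 2 := rfl
  have hterm : ∀ k : ℕ, |∫ x in c k..c (k+1), F x| ≤ M * M' / Q / Q := by
    intro k
    rw [hsub k]
    have hdiff : c (k+1) - c k = 1 / Q := by
      simp only [hcdef]; push_cast; field_simp; ring
    have hb : ∀ x ∈ Set.uIoc (c k) (c (k+1)), ‖(f x - f (c k)) * f ((Q:ℝ)*x)‖ ≤ M' / Q * M := by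
      intro x hx
      rw [Set.uIoc_of_le (hcs k)] at hx
      rw [Real.norm_eq_abs, abs_mul]
      have h1 : |f x - f (c k)| ≤ M' / Q := by
        refine (hlip (c k) x).trans ?_
        have habs : |x - c k| ≤ 1 / Q := by
          rw [abs_of_pos (by linarith [hx.1] : (0:ℝ) < x - c k)]
          linarith [hx.2, hdiff]
        calc M' * |x - c k| ≤ M' * (1/Q) := by gcongr
          _ = M' / Q := by ring
      exact mul_le_mul h1 (hM _) (abs_nonneg _) (by positivity)
    have hnorm := intervalIntegral.norm_integral_le_of_norm_le_const hb
    rw [Real.norm_eq_abs] at hnorm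
    calc |∫ x in c k..c (k+1), (f x - f (c k)) * f ((Q:ℝ)*x)|
        ≤ M' / Q * M * |c (k+1) - c k| := hnorm
      _ = M' / Q * M * (1 / Q) := by rw [hdiff, abs_of_pos (by positivity)]
      _ = M * M' / Q / Q := by ring
  have hsplit : ∫ x in (0:ℝ)..1, F x = ∑ k ∈ Finset.range Q, ∫ x in c k..c (k+1), F x := by
    rw [intervalIntegral.sum_integral_adjacent_intervals (fun k _ => hFc.intervalIntegrable _ _)]
    have e0 : c 0 = 0 := by simp [hcdef]
    have eQ : c Q = 1 := by simp [hcdef, div_self hQ0]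
    rw [e0, eQ]
  calc |∫ x in (0:ℝ)..1, F x|
      = |∑ k ∈ Finset.range Q, ∫ x in c k..c (k+1), F x| := by rw [hsplit]
    _ ≤ ∑ k ∈ Finset.range Q, |∫ x in c k..c (k+1), F x| := Finset.abs_sum_le_sum_abs _ _
    _ ≤ ∑ k ∈ Finset.range Q, M * M' / Q / Q := Finset.sum_le_sum (fun k _ => hterm k)
    _ = Q * (M * M' / Q / Q) := by rw [Finset.sum_const, Finset.card_range]; ring
    _ = M * M' / Q := by field_simp

lemma scale_int' (g : ℝ → ℝ) (hper : Function.Periodic g 1) (hc : Continuous g)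
    (N : ℕ) (hN : 1 ≤ N) :
    ∫ x in (0:ℝ)..1, g (N * x) = ∫ x in (0:ℝ)..1, g x := by
  have hN0 : (N : ℝ) ≠ 0 := by positivity
  have h_int : ∀ t₁ t₂, IntervalIntegrable g MeasureSpace.volume t₁ t₂ :=
    fun _ _ => hc.intervalIntegrable _ _
  rw [intervalIntegral.integral_comp_mul_left g hN0]
  have h1 : (N : ℝ) * 1 = (0:ℝ) + (N : ℤ) • (1:ℝ) := by
    rw [zsmul_eq_mul]; push_cast; ring
  rw [mul_zero, h1, hper.intervalIntegral_add_zsmul_eq N 0 h_int]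
  rw [zsmul_eq_mul, smul_eq_mul]
  push_cast
  rw [zero_add, ← mul_assoc, inv_mul_cancel₀ hN0, one_mul]

lemma corr_helper (f : ℝ → ℝ) (hf_per : Periodic f 1) (hf_C1 : ContDiff ℝ 1 f)
    (hf_mean : ∫ x in Set.Ioc (0 : ℝ) 1, f x = 0)
    (a : ℕ → ℕ) (ha : ∀ k, 2 ≤ a k) (i j : ℕ) (hij : i ≤ j) :
    |∫ x in (0:ℝ)..1, f ((prodA a i : ℝ) * x) * f ((prodA a j : ℝ) * x)| ≤
      (2 : ℝ) ^ (1 - ((j : ℤ) - (i : ℤ))) * Cnorm f ^ 2 := by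
  have hc : Continuous f := hf_C1.continuous
  have hc' : Continuous (deriv f) := hf_C1.continuous_deriv le_rfl
  have hperd : Periodic (deriv f) 1 := by
    intro x
    have h : (fun y => f (y + 1)) = f := funext fun y => hf_per y
    calc deriv f (x + 1) = deriv (fun y => f (y + 1)) x := (deriv_comp_add_const f 1 x).symm
    _ = deriv f x := by rw [h]
  set M := ⨆ x, |f x| with hMdef
  set M' := ⨆ x, |deriv f x| with hM'def
  have hM : ∀ x, |f x| ≤ M := fun x => le_ciSup (bdd_abs' f hf_per hc) x
  have hM' : ∀ x, |deriv f x| ≤ M' := fun x => le_ciSup (bdd_abs' (deriv f) hperd hc') x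
  have hM0 : 0 ≤ M := (abs_nonneg _).trans (hM 0)
  have hM'0 : 0 ≤ M' := (abs_nonneg _).trans (hM' 0)
  set Q := ∏ k ∈ Finset.Ioc i j, a k with hQdef
  set P := prodA a i with hPdef
  set d := j - i with hddef
  have hPj : prodA a j = P * Q := by
    rw [hPdef, hQdef, prodA, prodA, (id (Finset.Icc_add_one_left_eq_Ioc 0 j) : Finset.Icc 1 j = Finset.Ioc 0 j), (id (Finset.Icc_add_one_left_eq_Ioc 0 i) : Finset.Icc 1 i = Finset.Ioc 0 i)]
    exact (Finset.prod_Ioc_consecutive a (Nat.zero_le i) hij).symm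
  have hQ2 : 2 ^ d ≤ Q := by
    calc 2 ^ d = 2 ^ (Finset.Ioc i j).card := by rw [Nat.card_Ioc]
    _ ≤ Q := Finset.pow_card_le_prod _ _ _ (fun k _ => ha k)
  have hQ1 : 1 ≤ Q := le_trans (Nat.one_le_two_pow) hQ2
  have hP1 : 1 ≤ P := Finset.one_le_prod' (fun k _ => le_trans one_le_two (ha k))
  -- the function g u = f u * f (Q u) is 1-periodic and continuous
  set g := fun u : ℝ => f u * f ((Q : ℝ) * u) with hgdef
  have hgper : Periodic g 1 := by
    intro u
    have h2 : f ((Q:ℝ) * (u + 1)) = f ((Q:ℝ) * u) := by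
      have := (hf_per.nat_mul Q) ((Q:ℝ) * u)
      have he : (Q:ℝ) * (u + 1) = (Q:ℝ) * u + (Q:ℝ) * 1 := by ring
      rw [he, this]
    simp only [hgdef, hf_per u, h2]
  have hgc : Continuous g := hc.mul (hc.comp (continuous_const.mul continuous_id))
  -- change of variables
  have hstep1 : ∫ x in (0:ℝ)..1, f ((prodA a i : ℝ) * x) * f ((prodA a j : ℝ) * x)
      = ∫ x in (0:ℝ)..1, g x := by
    rw [← scale_int' g hgper hgc P hP1]
    congr 1
    funext x
    simp only [hgdef, hPj]
    push_cast
    ring_nf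
    rw [← hPdef]; ring_nf
  have hstep2 : |∫ x in (0:ℝ)..1, g x| ≤ M * M' / Q :=
    key_bound f hf_per hf_C1 hf_mean Q hQ1
  -- arithmetic
  have h2d : (0:ℝ) < 2 ^ d := by positivity
  have hQR : (0:ℝ) < (Q:ℝ) := by positivity
  have hzp : (2:ℝ) ^ (1 - ((j:ℤ) - (i:ℤ))) = 2 / 2 ^ d := by
    have hcast : (1 : ℤ) - ((j:ℤ) - (i:ℤ)) = 1 - (d : ℤ) := by
      have : (d : ℤ) = (j : ℤ) - (i : ℤ) := by
        rw [hddef]; omega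
      rw [this]
    rw [hcast, zpow_sub₀ (two_ne_zero), zpow_one, zpow_natCast, div_eq_mul_inv]
  have hfin : M * M' / Q ≤ (2:ℝ) ^ (1 - ((j:ℤ) - (i:ℤ))) * Cnorm f ^ 2 := by
    rw [hzp]
    have hCn : Cnorm f = M + M' := rfl
    calc M * M' / Q ≤ M * M' / 2 ^ d :=
          div_le_div_of_nonneg_left (by positivity) h2d (by exact_mod_cast hQ2)
      _ ≤ (2 * (M + M') ^ 2) / 2 ^ d := by
          rw [div_le_div_iff₀ h2d h2d]
          nlinarith [hM0, hM'0, sq_nonneg (M + M'), sq_nonneg (M - M')]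
      _ = 2 / 2 ^ d * Cnorm f ^ 2 := by rw [hCn]; ring
  calc |∫ x in (0:ℝ)..1, f ((prodA a i : ℝ) * x) * f ((prodA a j : ℝ) * x)|
      = |∫ x in (0:ℝ)..1, g x| := by rw [hstep1]
    _ ≤ M * M' / Q := hstep2
    _ ≤ _ := hfin

/-- Exponential decay of correlations:
`|E_μ[(f ∘ T_{[i]}) (f ∘ T_{[j]})]| ≤ 2^{−|i−j|+1} ‖f‖²`. -/
theorem correlation_decay
    (f : ℝ → ℝ) (hf_per : Periodic f 1) (hf_C1 : ContDiff ℝ 1 f)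
    (hf_mean : ∫ x in Set.Ioc (0 : ℝ) 1, f x = 0)
    (a : ℕ → ℕ) (ha : ∀ k, 2 ≤ a k)
    (i j : ℕ) (hi : 1 ≤ i) (hj : 1 ≤ j) :
    |∫ x, f ((prodA a i : ℝ) * x) * f ((prodA a j : ℝ) * x) ∂circleMeasure| ≤
      (2 : ℝ) ^ (1 - |(i : ℤ) - (j : ℤ)|) * Cnorm f ^ 2 := by
  have hconv : ∀ F : ℝ → ℝ, ∫ x, F x ∂circleMeasure = ∫ x in (0:ℝ)..1, F x := by
    intro F
    rw [circleMeasure]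
    exact (intervalIntegral.integral_of_le zero_le_one).symm
  rcases le_total i j with h | h
  · have habs : |(i : ℤ) - (j : ℤ)| = (j : ℤ) - (i : ℤ) := by
      rw [abs_sub_comm]
      exact abs_of_nonneg (sub_nonneg.2 (by exact_mod_cast h))
    rw [habs, hconv]
    exact corr_helper f hf_per hf_C1 hf_mean a ha i j h
  · have habs : |(i : ℤ) - (j : ℤ)| = (i : ℤ) - (j : ℤ) :=
      abs_of_nonneg (sub_nonneg.2 (by exact_mod_cast h))
    have hswap : ∫ x, f ((prodA a i : ℝ) * x) * f ((prodA a j : ℝ) * x) ∂circleMeasure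
        = ∫ x, f ((prodA a j : ℝ) * x) * f ((prodA a i : ℝ) * x) ∂circleMeasure := by
      congr 1
      funext x
      ring
    rw [habs, hswap, hconv]
    exact corr_helper f hf_per hf_C1 hf_mean a ha j i h
end

section
/- Let f ∈ C¹(S¹) with ∫ f dx = 0 and let a_1, a_2, … be any sequence of integers ≥ 2. Then there is a constant C depending only on ‖f‖ := sup|f| + sup|f'| such that Var_μ(S_n) ≤ C·n for all n ≥ 1. -/
/-!
Setting: the circle `S¹ = ℝ/ℤ` with Lebesgue (Haar) probability measure, realized as
`1`-periodic functions on `ℝ` together with Lebesgue measure restricted to `(0, 1]`.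
For an integer `b ≥ 2`, the map `T_b x = bx (mod 1)` lifts to `x ↦ b * x` on `ℝ`, and its
Perron–Frobenius operator (the `L²`-adjoint of the Koopman operator `g ↦ g ∘ T_b`) is
`(T̂*_b g)(x) = (1/b) ∑_{j<b} g((x+j)/b)`.
-/

open MeasureTheory ProbabilityTheory Filter Function
open scoped ENNReal Topology

section Aux


/-- A continuous `1`-periodic function is bounded. -/
lemma exists_bound_of_periodic {g : ℝ → ℝ} (hper : Periodic g 1) (hc : Continuous g) :
    ∃ M : ℝ, 0 ≤ M ∧ ∀ x, |g x| ≤ M := by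
  obtain ⟨M, hM⟩ := (isCompact_Icc (a := (0:ℝ)) (b := 1)).exists_bound_of_continuousOn
    hc.continuousOn
  refine ⟨max M 0, le_max_right _ _, fun x => ?_⟩
  have h1 : g (Int.fract x) = g x := by
    rw [Int.fract]
    simpa using hper.sub_int_mul_eq (n := ⌊x⌋) (x := x)
  rw [← h1]
  refine le_trans ?_ (le_max_left _ _)
  simpa [Real.norm_eq_abs] using hM (Int.fract x) ⟨Int.fract_nonneg x, (Int.fract_lt_one x).le⟩

lemma periodic_integral_comp_nat_mul {g : ℝ → ℝ} (hper : Periodic g 1) (hc : Continuous g)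
    {P : ℕ} (hP : 1 ≤ P) :
    ∫ x in (0:ℝ)..1, g ((P : ℝ) * x) = ∫ x in (0:ℝ)..1, g x := by
  have hP0 : (P : ℝ) ≠ 0 := Nat.cast_ne_zero.mpr (by omega)
  have h_int : ∀ t₁ t₂ : ℝ, IntervalIntegrable g MeasureSpace.volume t₁ t₂ :=
    fun t₁ t₂ => hc.intervalIntegrable t₁ t₂
  have hz := hper.intervalIntegral_add_zsmul_eq (P : ℤ) 0 h_int
  have hz' : ∫ x in (0:ℝ)..(P:ℝ), g x = (P:ℝ) * ∫ x in (0:ℝ)..1, g x := by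
    simpa using hz
  rw [intervalIntegral.integral_comp_mul_left g hP0]
  rw [mul_zero, mul_one, hz', smul_eq_mul, ← mul_assoc, inv_mul_cancel₀ hP0, one_mul]



/-- The key decorrelation bound, via integration by parts. -/
lemma covariance_integral_bound {f : ℝ → ℝ} (hper : Periodic f 1) (hf : ContDiff ℝ 1 f)
    (hmean : ∫ x in (0:ℝ)..1, f x = 0) {M M' : ℝ}
    (hM : ∀ x, |f x| ≤ M) (hM' : ∀ x, |deriv f x| ≤ M') (m : ℕ) (hm : 1 ≤ m) :
    |∫ x in (0:ℝ)..1, f x * f ((m:ℝ) * x)| ≤ M * M' / m := by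
  have hc : Continuous f := hf.continuous
  have h_int : ∀ t₁ t₂ : ℝ, IntervalIntegrable f MeasureSpace.volume t₁ t₂ :=
    fun t₁ t₂ => hc.intervalIntegrable t₁ t₂
  have hM0 : 0 ≤ M := le_trans (abs_nonneg _) (hM 0)
  have hM'0 : 0 ≤ M' := le_trans (abs_nonneg _) (hM' 0)
  have hm0 : (0:ℝ) < (m:ℝ) := by exact_mod_cast Nat.pos_of_ne_zero (by omega)
  set F : ℝ → ℝ := fun y => ∫ t in (0:ℝ)..y, f t with hFdef
  have hFderiv : ∀ y, HasDerivAt F (f y) y := fun y =>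
    intervalIntegral.integral_hasDerivAt_right (h_int 0 y)
      (hc.stronglyMeasurable.stronglyMeasurableAtFilter) hc.continuousAt
  have hFcont : Continuous F := by
    have : Differentiable ℝ F := fun y => (hFderiv y).differentiableAt
    exact this.continuous
  have hFper : Periodic F 1 := by
    intro y
    have h1 : F y + ∫ t in y..(y+1), f t = F (y + 1) :=
      intervalIntegral.integral_add_adjacent_intervals (h_int 0 y) (h_int y (y+1))
    have h2 : (∫ t in y..(y+1), f t) = ∫ t in (0:ℝ)..(0+1:ℝ), f t :=
      hper.intervalIntegral_add_eq y 0
    rw [zero_add, hmean] at h2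
    rw [← h1, h2, add_zero]
  have hF0 : F 0 = 0 := intervalIntegral.integral_same
  have hFm : F ((m:ℕ):ℝ) = 0 := by
    have h := hFper.nat_mul_eq (n := m)
    rw [mul_one] at h
    rw [h, hF0]
  have hFbound : ∀ y, |F y| ≤ M := by
    intro y
    have h1 : F (Int.fract y) = F y := by
      rw [Int.fract]
      simpa using hFper.sub_int_mul_eq (n := ⌊y⌋) (x := y)
    rw [← h1]
    have h2 : ‖∫ t in (0:ℝ)..(Int.fract y), f t‖ ≤ M * |Int.fract y - 0| :=
      intervalIntegral.norm_integral_le_of_norm_le_const fun x _ => by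
        simpa [Real.norm_eq_abs] using hM x
    have h3 : |Int.fract y - 0| ≤ 1 := by
      rw [sub_zero, abs_of_nonneg (Int.fract_nonneg y)]
      exact (Int.fract_lt_one y).le
    calc |F (Int.fract y)| ≤ M * |Int.fract y - 0| := h2
      _ ≤ M * 1 := by exact mul_le_mul_of_nonneg_left h3 hM0
      _ = M := mul_one M
  -- integration by parts
  set v : ℝ → ℝ := fun x => ((m:ℝ))⁻¹ * F ((m:ℝ) * x) with hvdef
  have hvderiv : ∀ x, HasDerivAt v (f ((m:ℝ) * x)) x := by
    intro x
    have h1 : HasDerivAt (fun y : ℝ => (m:ℝ) * y) ((m:ℝ) * 1) x :=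
      (hasDerivAt_id x).const_mul (m:ℝ)
    have h2 : HasDerivAt (fun y : ℝ => F ((m:ℝ) * y)) (f ((m:ℝ) * x) * ((m:ℝ) * 1)) x :=
      (hFderiv ((m:ℝ) * x)).comp x h1
    have h3 := h2.const_mul ((m:ℝ))⁻¹
    have he : (m:ℝ)⁻¹ * (f ((m:ℝ) * x) * ((m:ℝ) * 1)) = f ((m:ℝ) * x) := by
      rw [mul_one, mul_comm (f ((m:ℝ) * x)) (m:ℝ), inv_mul_cancel_left₀ hm0.ne']
    rw [he] at h3
    exact h3
  have hfderiv : ∀ x, HasDerivAt f (deriv f x) x := fun x =>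
    ((hf.differentiable one_ne_zero) x).hasDerivAt
  have hf'cont : Continuous (deriv f) := hf.continuous_deriv le_rfl
  have hibp := intervalIntegral.integral_mul_deriv_eq_deriv_mul_of_hasDerivAt
    (a := (0:ℝ)) (b := 1) (u := f) (v := v) (u' := deriv f) (v' := fun x => f ((m:ℝ) * x))
    hc.continuousOn (continuous_const.mul (hFcont.comp (continuous_const.mul continuous_id))).continuousOn
    (fun x _ => hfderiv x) (fun x _ => hvderiv x)
    (hf'cont.intervalIntegrable 0 1)
    ((hc.comp (continuous_const.mul continuous_id)).intervalIntegrable 0 1)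
  have hv1 : v 1 = 0 := by simp [hvdef, hFm]
  have hv0 : v 0 = 0 := by simp [hvdef, hF0]
  rw [hv1, hv0, mul_zero, mul_zero, sub_zero, zero_sub] at hibp
  rw [hibp, abs_neg]
  have hbound : ‖∫ x in (0:ℝ)..1, deriv f x * v x‖ ≤ (M' * ((m:ℝ)⁻¹ * M)) * |1 - (0:ℝ)| := by
    refine intervalIntegral.norm_integral_le_of_norm_le_const fun x _ => ?_
    rw [Real.norm_eq_abs, abs_mul]
    refine mul_le_mul (hM' x) ?_ (abs_nonneg _) hM'0
    rw [hvdef]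
    simp only [abs_mul, abs_inv, abs_of_nonneg hm0.le]
    exact mul_le_mul_of_nonneg_left (hFbound _) (by positivity)
  rw [Real.norm_eq_abs] at hbound
  calc |∫ x in (0:ℝ)..1, deriv f x * v x| ≤ (M' * ((m:ℝ)⁻¹ * M)) * |1 - (0:ℝ)| := hbound
    _ = M * M' / m := by rw [abs_of_nonneg (by norm_num : (0:ℝ) ≤ 1 - 0)]; field_simp; ring


lemma geom_half_sum_le_two (N : ℕ) : ∑ i ∈ Finset.range N, ((1:ℝ)/2)^i ≤ 2 := by
  rw [geom_sum_eq (by norm_num : (1:ℝ)/2 ≠ 1)]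
  have h0 : (0:ℝ) ≤ (1/2:ℝ)^N := by positivity
  have h : ((1/2:ℝ)^N - 1)/((1/2:ℝ) - 1) = 2 - 2 * (1/2:ℝ)^N := by ring
  rw [h]; linarith

lemma inner_sum_half (n k : ℕ) :
    ∑ l ∈ Finset.Icc 1 n, ((1:ℝ)/2)^((l-k)+(k-l)) ≤ 4 := by
  have hsub : Finset.Icc 1 n ⊆ Finset.Icc 0 k ∪ Finset.Icc k n := by
    intro l hl
    simp only [Finset.mem_Icc, Finset.mem_union] at *
    omega
  have hnn : ∀ l : ℕ, (0:ℝ) ≤ ((1:ℝ)/2)^((l-k)+(k-l)) := fun l => by positivity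
  have step1 : ∑ l ∈ Finset.Icc 1 n, ((1:ℝ)/2)^((l-k)+(k-l))
      ≤ ∑ l ∈ Finset.Icc 0 k ∪ Finset.Icc k n, ((1:ℝ)/2)^((l-k)+(k-l)) :=
    Finset.sum_le_sum_of_subset_of_nonneg hsub (fun l _ _ => hnn l)
  have step2 : ∑ l ∈ Finset.Icc 0 k ∪ Finset.Icc k n, ((1:ℝ)/2)^((l-k)+(k-l))
      ≤ (∑ l ∈ Finset.Icc 0 k, ((1:ℝ)/2)^((l-k)+(k-l)))
        + ∑ l ∈ Finset.Icc k n, ((1:ℝ)/2)^((l-k)+(k-l)) := by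
    have h := Finset.sum_union_inter (s₁ := Finset.Icc 0 k) (s₂ := Finset.Icc k n)
      (f := fun l => ((1:ℝ)/2)^((l-k)+(k-l)))
    have h2 : (0:ℝ) ≤ ∑ l ∈ Finset.Icc 0 k ∩ Finset.Icc k n, ((1:ℝ)/2)^((l-k)+(k-l)) :=
      Finset.sum_nonneg fun l _ => hnn l
    linarith
  have hA : ∑ l ∈ Finset.Icc 0 k, ((1:ℝ)/2)^((l-k)+(k-l)) ≤ 2 := by
    have : Finset.Icc 0 k = Finset.Ico 0 (k+1) := by rw [Finset.Ico_add_one_right_eq_Icc]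
    rw [this, Finset.sum_Ico_eq_sum_range]
    have hr : ∀ j ∈ Finset.range (k+1-0),
        ((1:ℝ)/2)^(((0+j)-k)+(k-(0+j))) = ((1:ℝ)/2)^(k-j) := by
      intro j hj
      simp only [Finset.mem_range] at hj
      congr 1
      omega
    rw [Finset.sum_congr rfl hr]
    have : ∑ j ∈ Finset.range (k+1-0), ((1:ℝ)/2)^(k-j)
        = ∑ j ∈ Finset.range (k+1), ((1:ℝ)/2)^j := by
      rw [← Finset.sum_range_reflect (fun j => ((1:ℝ)/2)^j) (k+1)]
      refine Finset.sum_congr rfl fun j hj => ?_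
      simp only [Finset.mem_range] at hj
      congr 1
    rw [this]
    exact geom_half_sum_le_two _
  have hB : ∑ l ∈ Finset.Icc k n, ((1:ℝ)/2)^((l-k)+(k-l)) ≤ 2 := by
    have : Finset.Icc k n = Finset.Ico k (n+1) := by rw [Finset.Ico_add_one_right_eq_Icc]
    rw [this, Finset.sum_Ico_eq_sum_range]
    have hr : ∀ j ∈ Finset.range (n+1-k),
        ((1:ℝ)/2)^(((k+j)-k)+(k-(k+j))) = ((1:ℝ)/2)^j := by
      intro j _
      congr 1
      omega
    rw [Finset.sum_congr rfl hr]
    exact geom_half_sum_le_two _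
  linarith

end Aux

/-- The variances of the Birkhoff sums grow at most linearly: `Var_μ(S_n) ≤ C n`, with a
constant `C` depending only on `‖f‖`. -/
theorem variance_linear_upper_bound
    (f : ℝ → ℝ) (hf_per : Periodic f 1) (hf_C1 : ContDiff ℝ 1 f)
    (hf_mean : ∫ x in Set.Ioc (0 : ℝ) 1, f x = 0) :
    ∃ C : ℝ, ∀ a : ℕ → ℕ, (∀ k, 2 ≤ a k) → ∀ n : ℕ, 1 ≤ n →
      variance (Sc a f n) circleMeasure ≤ C * n := by
  have hfc : Continuous f := hf_C1.continuous
  have hf'cont : Continuous (deriv f) := hf_C1.continuous_deriv le_rfl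
  have hf'per : Periodic (deriv f) 1 := by
    intro x
    have hfun : (fun y => f (y + 1)) = f := funext fun y => hf_per y
    calc deriv f (x + 1) = deriv (fun y => f (y + 1)) x := (deriv_comp_add_const f 1 x).symm
      _ = deriv f x := by rw [hfun]
  obtain ⟨M, hM0, hM⟩ := exists_bound_of_periodic hf_per hfc
  obtain ⟨M', hM'0, hM'⟩ := exists_bound_of_periodic hf'per hf'cont
  have hmean0 : ∫ x in (0:ℝ)..1, f x = 0 := by
    rw [intervalIntegral.integral_of_le zero_le_one]; exact hf_mean
  refine ⟨4 * (M * M'), fun a ha n _hn => ?_⟩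
  haveI : IsProbabilityMeasure circleMeasure := by
    constructor
    rw [circleMeasure, Measure.restrict_apply_univ, Real.volume_Ioc]
    norm_num
  have hP1 : ∀ k, 1 ≤ prodA a k := fun k =>
    Finset.one_le_prod' fun i _ => by linarith [ha i]
  -- the individual correlation integrals
  set c : ℕ → ℕ → ℝ := fun k l =>
    ∫ x in (0:ℝ)..1, f ((prodA a k : ℝ) * x) * f ((prodA a l : ℝ) * x) with hcdef
  have key : ∀ k l : ℕ, k ≤ l → |c k l| ≤ M * M' * ((1:ℝ)/2)^(l - k) := by
    intro k l hkl
    set m := ∏ i ∈ Finset.Ioc k l, a i with hmdef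
    have hm1 : 1 ≤ m := Finset.one_le_prod' fun i _ => by linarith [ha i]
    have hsplit : prodA a l = prodA a k * m := by
      rw [prodA, prodA, hmdef, show Finset.Icc 1 k = Finset.Ioc 0 k from Finset.Icc_add_one_left_eq_Ioc 0 k,
        show Finset.Icc 1 l = Finset.Ioc 0 l from Finset.Icc_add_one_left_eq_Ioc 0 l]
      exact (Finset.prod_Ioc_consecutive a (Nat.zero_le k) hkl).symm
    have hm2 : 2^(l-k) ≤ m := by
      calc 2^(l-k) = ∏ _i ∈ Finset.Ioc k l, 2 := by rw [Finset.prod_const, Nat.card_Ioc]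
        _ ≤ m := Finset.prod_le_prod' fun i _ => ha i
    set g : ℝ → ℝ := fun y => f y * f ((m:ℝ) * y) with hgdef
    have hgper : Periodic g 1 := by
      intro y
      have h1 : f ((m:ℝ) * (y+1)) = f ((m:ℝ) * y) := by
        have h2 := (hf_per.nat_mul m) ((m:ℝ) * y)
        rw [mul_one] at h2
        rw [show (m:ℝ) * (y+1) = (m:ℝ)*y + (m:ℝ) by ring, h2]
      simp only [hgdef]
      rw [hf_per y, h1]
    have hgcont : Continuous g := hfc.mul (hfc.comp (continuous_const.mul continuous_id))
    have heq : c k l = ∫ x in (0:ℝ)..1, g x := by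
      rw [hcdef, ← periodic_integral_comp_nat_mul hgper hgcont (hP1 k)]
      refine intervalIntegral.integral_congr fun x _ => ?_
      simp only [hgdef]
      congr 2
      rw [hsplit]
      push_cast
      ring
    rw [heq]
    have hb := covariance_integral_bound hf_per hf_C1 hmean0 hM hM' m hm1
    refine le_trans hb ?_
    have h2m : ((2:ℝ))^(l-k) ≤ (m:ℝ) := by exact_mod_cast hm2
    have h2p : (0:ℝ) < (2:ℝ)^(l-k) := by positivity
    calc M * M' / (m:ℝ) ≤ M * M' / (2:ℝ)^(l-k) :=
          div_le_div_of_nonneg_left (by positivity) h2p h2m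
      _ = M * M' * ((1:ℝ)/2)^(l-k) := by rw [one_div, inv_pow, div_eq_mul_inv]
  have keyabs : ∀ k l : ℕ, |c k l| ≤ M * M' * ((1:ℝ)/2)^((l-k)+(k-l)) := by
    intro k l
    rcases le_total k l with h | h
    · rw [Nat.sub_eq_zero_of_le h, add_zero]
      exact key k l h
    · rw [Nat.sub_eq_zero_of_le h, zero_add]
      have hcomm : c k l = c l k := by
        rw [hcdef]
        exact intervalIntegral.integral_congr fun x _ => mul_comm _ _
      rw [hcomm]
      exact key l k h
  -- compute the second moment
  have hterm_cont : ∀ k : ℕ, Continuous fun x : ℝ => f ((prodA a k : ℝ) * x) := fun k =>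
    hfc.comp (continuous_const.mul continuous_id)
  have hSc_cont : Continuous (Sc a f n) := by
    have : Sc a f n = fun x => ∑ k ∈ Finset.Icc 1 n, f ((prodA a k : ℝ) * x) := rfl
    rw [this]
    exact continuous_finset_sum _ fun k _ => hterm_cont k
  have hvar : variance (Sc a f n) circleMeasure
      ≤ ∫ x, (Sc a f n x)^2 ∂circleMeasure := by
    have h := variance_le_expectation_sq (X := Sc a f n) (μ := circleMeasure)
      hSc_cont.aestronglyMeasurable
    simpa [Pi.pow_apply] using h
  have hcompute : (∫ x, (Sc a f n x)^2 ∂circleMeasure)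
      = ∑ k ∈ Finset.Icc 1 n, ∑ l ∈ Finset.Icc 1 n, c k l := by
    have hexp : ∀ x : ℝ, (Sc a f n x)^2 = ∑ k ∈ Finset.Icc 1 n, ∑ l ∈ Finset.Icc 1 n,
        f ((prodA a k : ℝ) * x) * f ((prodA a l : ℝ) * x) := by
      intro x
      rw [show Sc a f n x = ∑ k ∈ Finset.Icc 1 n, f ((prodA a k : ℝ) * x) from rfl, sq,
        Finset.sum_mul_sum]
    rw [circleMeasure, ← intervalIntegral.integral_of_le zero_le_one]
    simp_rw [hexp]
    rw [intervalIntegral.integral_finset_sum (fun k _ =>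
      (show Continuous (fun x => ∑ l ∈ Finset.Icc 1 n, f ((prodA a k : ℝ) * x) * f ((prodA a l : ℝ) * x)) from
        continuous_finset_sum _ fun l _ => (hterm_cont k).mul (hterm_cont l)).intervalIntegrable 0 1)]
    exact Finset.sum_congr rfl fun k _ => intervalIntegral.integral_finset_sum fun l _ =>
      ((hterm_cont k).mul (hterm_cont l)).intervalIntegrable 0 1
  have hsum : ∑ k ∈ Finset.Icc 1 n, ∑ l ∈ Finset.Icc 1 n, c k l ≤ 4 * (M * M') * n := by
    have hinner : ∀ k ∈ Finset.Icc 1 n, ∑ l ∈ Finset.Icc 1 n, c k l ≤ M * M' * 4 := by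
      intro k _
      calc ∑ l ∈ Finset.Icc 1 n, c k l ≤ ∑ l ∈ Finset.Icc 1 n, |c k l| :=
            Finset.sum_le_sum fun l _ => le_abs_self _
        _ ≤ ∑ l ∈ Finset.Icc 1 n, M * M' * ((1:ℝ)/2)^((l-k)+(k-l)) :=
            Finset.sum_le_sum fun l _ => keyabs k l
        _ = M * M' * ∑ l ∈ Finset.Icc 1 n, ((1:ℝ)/2)^((l-k)+(k-l)) := by
            rw [Finset.mul_sum]
        _ ≤ M * M' * 4 := mul_le_mul_of_nonneg_left (inner_sum_half n k) (by positivity)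
    calc ∑ k ∈ Finset.Icc 1 n, ∑ l ∈ Finset.Icc 1 n, c k l
        ≤ ∑ _k ∈ Finset.Icc 1 n, M * M' * 4 := Finset.sum_le_sum hinner
      _ = (Finset.Icc 1 n).card * (M * M' * 4) := by rw [Finset.sum_const, nsmul_eq_mul]
      _ = 4 * (M * M') * n := by rw [Nat.card_Icc]; push_cast; ring
  calc variance (Sc a f n) circleMeasure ≤ ∫ x, (Sc a f n x)^2 ∂circleMeasure := hvar
    _ = ∑ k ∈ Finset.Icc 1 n, ∑ l ∈ Finset.Icc 1 n, c k l := hcompute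
    _ ≤ 4 * (M * M') * n := hsum
end

section
/- Let f ∈ C¹(S¹) with ∫ f dx = 0 and suppose there exists v ∈ C¹(S¹) with f = v ∘ T_2 − v. Set d_l := 2^{2^{2^l}} for l ∈ ℕ and define the sequence a_k := 3 if there exists l with d_l ≤ k < d_l + l, and a_k := 2 otherwise. Then for every α > 0, Var_μ(S_n)/n^α → 0 as n → ∞. -/
/-!
Setting: the circle `S¹ = ℝ/ℤ` with Lebesgue (Haar) probability measure, realized as
`1`-periodic functions on `ℝ` together with Lebesgue measure restricted to `(0, 1]`.
For an integer `b ≥ 2`, the map `T_b x = bx (mod 1)` lifts to `x ↦ b * x` on `ℝ`, and its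
Perron–Frobenius operator (the `L²`-adjoint of the Koopman operator `g ↦ g ∘ T_b`) is
`(T̂*_b g)(x) = (1/b) ∑_{j<b} g((x+j)/b)`.
-/

open MeasureTheory ProbabilityTheory Filter Function
open scoped ENNReal Topology

open Classical in
/-- The sequence of Example 2': `a_k = 3` if `d_l ≤ k < d_l + l` for some `l`, where
`d_l = 2^(2^(2^l))`, and `a_k = 2` otherwise. -/
noncomputable def seqTower : ℕ → ℕ := fun k =>
  if ∃ l : ℕ, 2 ^ 2 ^ 2 ^ l ≤ k ∧ k < 2 ^ 2 ^ 2 ^ l + l then 3 else 2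


/-! ### Auxiliary lemmas -/

lemma prodA_zero (a : ℕ → ℕ) : prodA a 0 = 1 := by simp [prodA]

lemma prodA_succ (a : ℕ → ℕ) (n : ℕ) : prodA a (n + 1) = prodA a n * a (n + 1) :=
  Finset.prod_Icc_succ_top (Nat.succ_le_succ (Nat.zero_le n)) a

instance : IsProbabilityMeasure circleMeasure := by
  constructor
  simp [circleMeasure, Real.volume_Ioc]

/-- Telescoping bound for the Birkhoff sums of a coboundary. -/
lemma tele_bound (a : ℕ → ℕ) (v : ℝ → ℝ) (M : ℝ) (hM : ∀ y, |v y| ≤ M) (x : ℝ) :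
    ∀ n : ℕ,
      |(∑ k ∈ Finset.Icc 1 n, (v (2 * ((prodA a k : ℝ) * x)) - v ((prodA a k : ℝ) * x)))
          - v (2 * ((prodA a n : ℝ) * x)) + v (2 * x)|
        ≤ 2 * M * ((Finset.Icc 1 n).filter (fun k => a k ≠ 2)).card := by
  intro n
  induction n with
  | zero => simp [prodA]
  | succ n ih =>
    have hIcc : Finset.Icc 1 (n + 1) = insert (n + 1) (Finset.Icc 1 n) := by
      ext m
      simp only [Finset.mem_Icc, Finset.mem_insert]
      omega
    have hnotmem : (n + 1) ∉ Finset.Icc 1 n := by simp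
    rw [hIcc, Finset.sum_insert hnotmem, Finset.filter_insert]
    rcases eq_or_ne (a (n + 1)) 2 with h2 | h2
    · have hp : ((prodA a (n + 1) : ℕ) : ℝ) * x = 2 * ((prodA a n : ℝ) * x) := by
        rw [prodA_succ, h2]
        push_cast
        ring
      rw [if_neg (by simp [h2])]
      calc |(v (2 * ((prodA a (n+1) : ℝ) * x)) - v ((prodA a (n+1) : ℝ) * x)
              + ∑ k ∈ Finset.Icc 1 n, (v (2 * ((prodA a k : ℝ) * x)) - v ((prodA a k : ℝ) * x)))
              - v (2 * ((prodA a (n+1) : ℝ) * x)) + v (2 * x)|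
          = |(∑ k ∈ Finset.Icc 1 n, (v (2 * ((prodA a k : ℝ) * x)) - v ((prodA a k : ℝ) * x)))
              - v (2 * ((prodA a n : ℝ) * x)) + v (2 * x)| := congrArg abs (by rw [hp]; ring)
        _ ≤ _ := ih
    · rw [if_pos h2, Finset.card_insert_of_notMem (by simp [hnotmem])]
      have key : (v (2 * ((prodA a (n+1) : ℝ) * x)) - v ((prodA a (n+1) : ℝ) * x)
              + ∑ k ∈ Finset.Icc 1 n, (v (2 * ((prodA a k : ℝ) * x)) - v ((prodA a k : ℝ) * x)))
              - v (2 * ((prodA a (n+1) : ℝ) * x)) + v (2 * x)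
          = ((∑ k ∈ Finset.Icc 1 n, (v (2 * ((prodA a k : ℝ) * x)) - v ((prodA a k : ℝ) * x)))
              - v (2 * ((prodA a n : ℝ) * x)) + v (2 * x))
            + (v (2 * ((prodA a n : ℝ) * x)) - v ((prodA a (n+1) : ℝ) * x)) := by ring
      rw [key]
      have h3 : |v (2 * ((prodA a n : ℝ) * x)) - v ((prodA a (n+1) : ℝ) * x)| ≤ 2 * M := by
        calc |v (2 * ((prodA a n : ℝ) * x)) - v ((prodA a (n+1) : ℝ) * x)|
            ≤ |v (2 * ((prodA a n : ℝ) * x))| + |v ((prodA a (n+1) : ℝ) * x)| := abs_sub _ _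
          _ ≤ M + M := add_le_add (hM _) (hM _)
          _ = 2 * M := by ring
      calc _ ≤ |(∑ k ∈ Finset.Icc 1 n, (v (2 * ((prodA a k : ℝ) * x)) - v ((prodA a k : ℝ) * x)))
              - v (2 * ((prodA a n : ℝ) * x)) + v (2 * x)|
            + |v (2 * ((prodA a n : ℝ) * x)) - v ((prodA a (n+1) : ℝ) * x)| := abs_add_le _ _
        _ ≤ 2 * M * ((Finset.Icc 1 n).filter (fun k => a k ≠ 2)).card + 2 * M :=
            add_le_add ih h3
        _ = 2 * M * (((Finset.Icc 1 n).filter (fun k => a k ≠ 2)).card + 1) := by ring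
        _ = _ := by push_cast; ring

lemma seqTower_exists_of_ne_two {k : ℕ} (h : seqTower k ≠ 2) :
    ∃ l : ℕ, 2 ^ 2 ^ 2 ^ l ≤ k ∧ k < 2 ^ 2 ^ 2 ^ l + l := by
  by_contra hc
  exact h (by simp [seqTower, hc])

lemma tower_count_le (n : ℕ) :
    ((Finset.Icc 1 n).filter (fun k => seqTower k ≠ 2)).card ≤ (Nat.log 2 n + 1) ^ 2 := by
  set L := Nat.log 2 n with hL
  have hsub : (Finset.Icc 1 n).filter (fun k => seqTower k ≠ 2)
      ⊆ (Finset.range (L + 1)).biUnion (fun l => Finset.Ico (2 ^ 2 ^ 2 ^ l) (2 ^ 2 ^ 2 ^ l + l)) := by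
    intro k hk
    rw [Finset.mem_filter, Finset.mem_Icc] at hk
    obtain ⟨⟨hk1, hkn⟩, hk3⟩ := hk
    obtain ⟨l, hl1, hl2⟩ := seqTower_exists_of_ne_two hk3
    have hln : 2 ^ l ≤ n := by
      calc 2 ^ l ≤ 2 ^ 2 ^ 2 ^ l := by
            apply Nat.pow_le_pow_right (by norm_num)
            calc l ≤ 2 ^ l := (Nat.lt_two_pow_self (n := l)).le
              _ ≤ 2 ^ 2 ^ l := Nat.pow_le_pow_right (by norm_num) (Nat.lt_two_pow_self (n := l)).le
        _ ≤ k := hl1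
        _ ≤ n := hkn
    have hlL : l ≤ L := by
      rw [hL]
      exact (Nat.le_log_iff_pow_le (by norm_num) (by omega)).mpr hln
    rw [Finset.mem_biUnion]
    exact ⟨l, Finset.mem_range.mpr (Nat.lt_succ_of_le hlL), Finset.mem_Ico.mpr ⟨hl1, hl2⟩⟩
  calc ((Finset.Icc 1 n).filter (fun k => seqTower k ≠ 2)).card
      ≤ ((Finset.range (L + 1)).biUnion
          (fun l => Finset.Ico (2 ^ 2 ^ 2 ^ l) (2 ^ 2 ^ 2 ^ l + l))).card :=
        Finset.card_le_card hsub
    _ ≤ ∑ l ∈ Finset.range (L + 1), (Finset.Ico (2 ^ 2 ^ 2 ^ l) (2 ^ 2 ^ 2 ^ l + l)).card :=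
        Finset.card_biUnion_le
    _ = ∑ l ∈ Finset.range (L + 1), l := by
        apply Finset.sum_congr rfl
        intro l _
        simp [Nat.card_Ico]
    _ ≤ ∑ _l ∈ Finset.range (L + 1), L := by
        apply Finset.sum_le_sum
        intro l hl
        exact Nat.lt_succ_iff.mp (Finset.mem_range.mp hl)
    _ = (L + 1) * L := by simp [Finset.sum_const, mul_comm]
    _ ≤ (L + 1) ^ 2 := by nlinarith

/-- If `f` is a `C¹` coboundary for `T_2` (`f = v ∘ T_2 − v` with `v ∈ C¹(S¹)`), then along
the sequence `seqTower` the variance of the Birkhoff sums is `o(n^α)` for every `α > 0`. -/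
theorem variance_subpolynomial_for_tower_sequence
    (f v : ℝ → ℝ)
    (hf_per : Periodic f 1) (hf_C1 : ContDiff ℝ 1 f)
    (hf_mean : ∫ x in Set.Ioc (0 : ℝ) 1, f x = 0)
    (hv_per : Periodic v 1) (hv_C1 : ContDiff ℝ 1 v)
    (hcob : ∀ x, f x = v (2 * x) - v x) :
    ∀ α : ℝ, 0 < α →
      Tendsto (fun n : ℕ => variance (Sc seqTower f n) circleMeasure / (n : ℝ) ^ α)
        atTop (𝓝 0) := by
  intro α hα
  -- A uniform bound `M0` on `|v|`, from continuity and periodicity.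
  obtain ⟨M0, hM0⟩ := isCompact_Icc.exists_bound_of_continuousOn
      (f := v) (s := Set.Icc (0:ℝ) 1) hv_C1.continuous.continuousOn
  have hM : ∀ y : ℝ, |v y| ≤ M0 := by
    intro y
    have h1 : v y = v (Int.fract y) := by
      have := hv_per.sub_int_mul_eq (x := y) (n := ⌊y⌋)
      rw [Int.fract]
      simpa using this.symm
    rw [h1]
    simpa using hM0 _ ⟨Int.fract_nonneg y, (Int.fract_lt_one y).le⟩
  have hM0nn : 0 ≤ M0 := (abs_nonneg _).trans (hM 0)
  set C : ℕ → ℕ := fun n => ((Finset.Icc 1 n).filter (fun k => seqTower k ≠ 2)).card with hCdef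
  -- Pointwise bound on the Birkhoff sums via telescoping.
  have hSc : ∀ n x, |Sc seqTower f n x| ≤ 2 * M0 * ((C n : ℝ) + 1) := by
    intro n x
    have hrw : Sc seqTower f n x
        = ∑ k ∈ Finset.Icc 1 n,
            (v (2 * ((prodA seqTower k : ℝ) * x)) - v ((prodA seqTower k : ℝ) * x)) := by
      exact Finset.sum_congr rfl fun k _ => hcob _
    have htel := tele_bound seqTower v M0 hM x n
    have hsplit : Sc seqTower f n x
        = ((∑ k ∈ Finset.Icc 1 n,
              (v (2 * ((prodA seqTower k : ℝ) * x)) - v ((prodA seqTower k : ℝ) * x)))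
            - v (2 * ((prodA seqTower n : ℝ) * x)) + v (2 * x))
          + v (2 * ((prodA seqTower n : ℝ) * x)) - v (2 * x) := by
      rw [hrw]; ring
    rw [hsplit]
    calc |((∑ k ∈ Finset.Icc 1 n,
              (v (2 * ((prodA seqTower k : ℝ) * x)) - v ((prodA seqTower k : ℝ) * x)))
            - v (2 * ((prodA seqTower n : ℝ) * x)) + v (2 * x))
          + v (2 * ((prodA seqTower n : ℝ) * x)) - v (2 * x)|
        ≤ |((∑ k ∈ Finset.Icc 1 n,
              (v (2 * ((prodA seqTower k : ℝ) * x)) - v ((prodA seqTower k : ℝ) * x)))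
            - v (2 * ((prodA seqTower n : ℝ) * x)) + v (2 * x))
          + v (2 * ((prodA seqTower n : ℝ) * x))| + |v (2 * x)| := abs_sub _ _
      _ ≤ |(∑ k ∈ Finset.Icc 1 n,
              (v (2 * ((prodA seqTower k : ℝ) * x)) - v ((prodA seqTower k : ℝ) * x)))
            - v (2 * ((prodA seqTower n : ℝ) * x)) + v (2 * x)|
          + |v (2 * ((prodA seqTower n : ℝ) * x))| + |v (2 * x)| := by
            exact add_le_add (abs_add_le _ _) le_rfl
      _ ≤ 2 * M0 * (C n : ℝ) + M0 + M0 := by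
            exact add_le_add (add_le_add htel (hM _)) (hM _)
      _ = 2 * M0 * ((C n : ℝ) + 1) := by ring
  -- Measurability of the Birkhoff sums.
  have hcont : ∀ n, Continuous (Sc seqTower f n) := by
    intro n
    exact continuous_finset_sum _ fun k _ =>
      hf_C1.continuous.comp (continuous_const.mul continuous_id)
  -- Variance bound.
  have hvar : ∀ n, variance (Sc seqTower f n) circleMeasure
      ≤ (2 * M0 * ((C n : ℝ) + 1)) ^ 2 := by
    intro n
    have hb := variance_le_sq_of_bounded (μ := circleMeasure)
        (a := -(2 * M0 * ((C n : ℝ) + 1))) (b := 2 * M0 * ((C n : ℝ) + 1))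
        (ae_of_all _ fun x => Set.mem_Icc.mpr (abs_le.mp (hSc n x)))
        (hcont n).aemeasurable
    calc variance (Sc seqTower f n) circleMeasure
        ≤ ((2 * M0 * ((C n : ℝ) + 1) - -(2 * M0 * ((C n : ℝ) + 1))) / 2) ^ 2 := hb
      _ = (2 * M0 * ((C n : ℝ) + 1)) ^ 2 := by ring
  -- Constants for the logarithmic bound.
  have hlog2pos : (0:ℝ) < Real.log 2 := Real.log_pos (by norm_num)
  set c : ℝ := 1 / Real.log 2 + 2 with hcdef
  have hcpos : 0 < c := by positivity
  -- `C n + 1 ≤ (c log n)²` for `n ≥ 3`.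
  have hCbound : ∀ n : ℕ, 3 ≤ n → (C n : ℝ) + 1 ≤ (c * Real.log n) ^ 2 := by
    intro n hn
    have hlogn : (1:ℝ) ≤ Real.log n := by
      have h3 : (1:ℝ) ≤ Real.log 3 := by
        rw [Real.le_log_iff_exp_le (by norm_num)]
        calc Real.exp 1 ≤ 2.7182818286 := Real.exp_one_lt_d9.le
          _ ≤ 3 := by norm_num
      calc (1:ℝ) ≤ Real.log 3 := h3
        _ ≤ Real.log n := Real.log_le_log (by norm_num) (by exact_mod_cast hn)
    set L : ℕ := Nat.log 2 n with hLdef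
    have h1 : (C n : ℝ) ≤ ((L : ℝ) + 1) ^ 2 := by
      have := tower_count_le n
      rw [hCdef]
      push_cast
      exact_mod_cast Nat.cast_le.mpr this
    have h2 : ((L : ℝ) + 1) ^ 2 + 1 ≤ ((L : ℝ) + 2) ^ 2 := by
      have : (0:ℝ) ≤ (L : ℝ) := Nat.cast_nonneg L
      nlinarith
    have h3 : (L : ℝ) + 2 ≤ c * Real.log n := by
      have hlb : (L : ℝ) ≤ Real.logb 2 n := Real.natLog_le_logb n 2
      have hlogb : Real.logb 2 n = Real.log n / Real.log 2 := rfl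
      have : (L : ℝ) + 2 ≤ Real.log n / Real.log 2 + 2 := by linarith
      calc (L : ℝ) + 2 ≤ Real.log n / Real.log 2 + 2 := this
        _ = (1 / Real.log 2) * Real.log n + 2 := by ring
        _ ≤ (1 / Real.log 2) * Real.log n + 2 * Real.log n := by nlinarith
        _ = c * Real.log n := by rw [hcdef]; ring
    have h4 : (0:ℝ) ≤ (L : ℝ) + 2 := by positivity
    calc (C n : ℝ) + 1 ≤ ((L : ℝ) + 1) ^ 2 + 1 := by linarith
      _ ≤ ((L : ℝ) + 2) ^ 2 := h2
      _ ≤ (c * Real.log n) ^ 2 := pow_le_pow_left₀ h4 h3 2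
  -- The dominating sequence tends to zero.
  set K : ℝ := 4 * M0 ^ 2 * c ^ 4 with hKdef
  have hKnn : 0 ≤ K := by positivity
  have htend : Tendsto (fun n : ℕ => K * (Real.log n ^ 4 / (n : ℝ) ^ α)) atTop (𝓝 0) := by
    have h1 : Tendsto (fun x : ℝ => Real.log x ^ (4:ℕ) / x ^ α) atTop (𝓝 0) := by
      have := (isLittleO_log_rpow_rpow_atTop (4:ℝ) hα).tendsto_div_nhds_zero
      have heq : (fun x : ℝ => Real.log x ^ (4:ℝ) / x ^ α)
          = fun x : ℝ => Real.log x ^ (4:ℕ) / x ^ α := by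
        funext x
        rw [show (4:ℝ) = ((4:ℕ):ℝ) by norm_num, Real.rpow_natCast]
      rwa [heq] at this
    have h2 := h1.comp tendsto_natCast_atTop_atTop (α := ℕ)
    simpa using h2.const_mul K
  -- Squeeze.
  apply squeeze_zero' (g := fun n : ℕ => K * (Real.log n ^ 4 / (n : ℝ) ^ α))
  · exact Eventually.of_forall fun n =>
      div_nonneg (variance_nonneg _ _) (Real.rpow_nonneg (Nat.cast_nonneg n) α)
  · filter_upwards [eventually_ge_atTop 3] with n hn
    have hnpos : (0:ℝ) < (n : ℝ) ^ α :=
      Real.rpow_pos_of_pos (by exact_mod_cast Nat.lt_of_lt_of_le (by norm_num) hn) α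
    have hlognn : 0 ≤ Real.log n := by
      apply Real.log_nonneg
      have : (3:ℝ) ≤ (n : ℝ) := by exact_mod_cast hn
      linarith
    have hnum : variance (Sc seqTower f n) circleMeasure ≤ K * Real.log n ^ 4 := by
      have hstep : (2 * M0 * ((C n : ℝ) + 1)) ^ 2 ≤ (2 * M0 * (c * Real.log n) ^ 2) ^ 2 := by
        apply pow_le_pow_left₀
        · positivity
        · exact mul_le_mul_of_nonneg_left (hCbound n hn) (by positivity)
      calc variance (Sc seqTower f n) circleMeasure
          ≤ (2 * M0 * ((C n : ℝ) + 1)) ^ 2 := hvar n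
        _ ≤ (2 * M0 * (c * Real.log n) ^ 2) ^ 2 := hstep
        _ = K * Real.log n ^ 4 := by rw [hKdef]; ring
    calc variance (Sc seqTower f n) circleMeasure / (n : ℝ) ^ α
        ≤ (K * Real.log n ^ 4) / (n : ℝ) ^ α := (div_le_div_iff_of_pos_right hnpos).mpr hnum
      _ = K * (Real.log n ^ 4 / (n : ℝ) ^ α) := by ring
  · exact htend
end
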